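/- arXiv:1702.03097 — 6 statements merged into one kernel-verified Lean document; each statement's English description precedes it below -/
import Mathlib

section
/- Let x₀, y₀, φ₀, x₁, y₁, φ₁, v₀, v₁ : ℝ → ℝ be functions such that x₀, y₀, x₁, y₁ are differentiable with x₀'(t) = v₀(t)·cos φ₀(t), y₀'(t) = v₀(t)·sin φ₀(t), x₁'(t) = v₁(t)·cos φ₁(t), y₁'(t) = v₁(t)·sin φ₁(t). Let d, β : ℝ → ℝ be differentiable with d(t) > 0, x₀(t) − x₁(t) = d(t)·cos(φ₁(t) + β(t)) and y₀(t) − y₁(t) = d(t)·sin(φ₁(t) + β(t)) for all t. Then for all t, d'(t) = −v₁(t)·cos β(t) + v₀(t)·cos(γ(t) + β(t)), where γ(t) = φ₁(t) − φ₀(t). -/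
/-- distance-error kinematics of two unicycles.
With x₀ − x₁ = d cos(φ₁ + β), y₀ − y₁ = d sin(φ₁ + β) and d > 0, the
inter-vehicular distance satisfies
d' = −v₁ cos β + v₀ cos(γ + β), where γ = φ₁ − φ₀. -/
theorem distance_error_dynamics
    (x₀ y₀ φ₀ x₁ y₁ φ₁ v₀ v₁ d β : ℝ → ℝ)
    (hx₀ : ∀ t, HasDerivAt x₀ (v₀ t * Real.cos (φ₀ t)) t)
    (hy₀ : ∀ t, HasDerivAt y₀ (v₀ t * Real.sin (φ₀ t)) t)
    (hx₁ : ∀ t, HasDerivAt x₁ (v₁ t * Real.cos (φ₁ t)) t)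
    (hy₁ : ∀ t, HasDerivAt y₁ (v₁ t * Real.sin (φ₁ t)) t)
    (hd : Differentiable ℝ d) (hβ : Differentiable ℝ β)
    (hdpos : ∀ t, 0 < d t)
    (hgx : ∀ t, x₀ t - x₁ t = d t * Real.cos (φ₁ t + β t))
    (hgy : ∀ t, y₀ t - y₁ t = d t * Real.sin (φ₁ t + β t)) :
    ∀ t, deriv d t =
      -v₁ t * Real.cos (β t) + v₀ t * Real.cos ((φ₁ t - φ₀ t) + β t) := by
  intro t
  -- d² = (x₀−x₁)² + (y₀−y₁)²
  have heq : (fun s => d s ^ 2) =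
      fun s => (x₀ s - x₁ s) ^ 2 + (y₀ s - y₁ s) ^ 2 := by
    funext s
    rw [hgx s, hgy s]
    have := Real.sin_sq_add_cos_sq (φ₁ s + β s)
    nlinarith [this]
  have h1 : HasDerivAt (fun s => d s ^ 2) (2 * d t ^ 1 * deriv d t) t :=
    (hd t).hasDerivAt.pow 2
  have h2 : HasDerivAt (fun s => (x₀ s - x₁ s) ^ 2 + (y₀ s - y₁ s) ^ 2)
      (2 * (x₀ t - x₁ t) ^ 1 * (v₀ t * Real.cos (φ₀ t) - v₁ t * Real.cos (φ₁ t)) +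
       2 * (y₀ t - y₁ t) ^ 1 * (v₀ t * Real.sin (φ₀ t) - v₁ t * Real.sin (φ₁ t))) t :=
    (((hx₀ t).sub (hx₁ t)).pow 2).add (((hy₀ t).sub (hy₁ t)).pow 2)
  rw [heq] at h1
  have hu := h1.unique h2
  have hd0 := (hdpos t).ne'
  have key : d t * deriv d t =
      d t * (-v₁ t * Real.cos (β t) + v₀ t * Real.cos ((φ₁ t - φ₀ t) + β t)) := by
    rw [hgx t, hgy t] at hu
    simp only [Real.cos_add, Real.sin_add, Real.cos_sub, Real.sin_sub] at hu ⊢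
    linear_combination hu / 2 - d t * v₁ t * Real.cos (β t) * Real.sin_sq_add_cos_sq (φ₁ t)
  exact mul_left_cancel₀ hd0 key
end

section
/- Let x₀, y₀, φ₀, x₁, y₁, φ₁, v₀, v₁, ω₁ : ℝ → ℝ be functions such that x₀, y₀, x₁, y₁, φ₁ are differentiable with x₀'(t) = v₀(t)·cos φ₀(t), y₀'(t) = v₀(t)·sin φ₀(t), x₁'(t) = v₁(t)·cos φ₁(t), y₁'(t) = v₁(t)·sin φ₁(t), and φ₁'(t) = ω₁(t). Let d, β : ℝ → ℝ be differentiable with d(t) > 0, x₀(t) − x₁(t) = d(t)·cos(φ₁(t) + β(t)) and y₀(t) − y₁(t) = d(t)·sin(φ₁(t) + β(t)) for all t. Then for all t, β'(t) = −ω₁(t) + (v₁(t)/d(t))·sin β(t) − (v₀(t)/d(t))·sin(γ(t) + β(t)), where γ(t) = φ₁(t) − φ₀(t). -/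
/-- bearing-error kinematics of two unicycles.
With x₀ − x₁ = d cos(φ₁ + β), y₀ − y₁ = d sin(φ₁ + β) and d > 0, the
bearing angle satisfies
β' = −ω₁ + (v₁/d) sin β − (v₀/d) sin(γ + β), where γ = φ₁ − φ₀. -/
theorem bearing_error_dynamics
    (x₀ y₀ φ₀ x₁ y₁ φ₁ v₀ v₁ ω₁ d β : ℝ → ℝ)
    (hx₀ : ∀ t, HasDerivAt x₀ (v₀ t * Real.cos (φ₀ t)) t)
    (hy₀ : ∀ t, HasDerivAt y₀ (v₀ t * Real.sin (φ₀ t)) t)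
    (hx₁ : ∀ t, HasDerivAt x₁ (v₁ t * Real.cos (φ₁ t)) t)
    (hy₁ : ∀ t, HasDerivAt y₁ (v₁ t * Real.sin (φ₁ t)) t)
    (hφ₁ : ∀ t, HasDerivAt φ₁ (ω₁ t) t)
    (hd : Differentiable ℝ d) (hβ : Differentiable ℝ β)
    (hdpos : ∀ t, 0 < d t)
    (hgx : ∀ t, x₀ t - x₁ t = d t * Real.cos (φ₁ t + β t))
    (hgy : ∀ t, y₀ t - y₁ t = d t * Real.sin (φ₁ t + β t)) :
    ∀ t, deriv β t =
      -ω₁ t + (v₁ t / d t) * Real.sin (β t)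
        - (v₀ t / d t) * Real.sin ((φ₁ t - φ₀ t) + β t) := by
  intro t
  set D := deriv d t with hD
  set B := deriv β t with hB
  have hdt : HasDerivAt d D t := (hd t).hasDerivAt
  have hβt : HasDerivAt β B t := (hβ t).hasDerivAt
  have hθ : HasDerivAt (fun t => φ₁ t + β t) (ω₁ t + B) t := (hφ₁ t).add hβt
  have hcos : HasDerivAt (fun t => Real.cos (φ₁ t + β t))
      (-Real.sin (φ₁ t + β t) * (ω₁ t + B)) t := hθ.cos
  have hsin : HasDerivAt (fun t => Real.sin (φ₁ t + β t))
      (Real.cos (φ₁ t + β t) * (ω₁ t + B)) t := hθ.sin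
  have h1 : HasDerivAt (fun t => d t * Real.cos (φ₁ t + β t))
      (D * Real.cos (φ₁ t + β t) + d t * (-Real.sin (φ₁ t + β t) * (ω₁ t + B))) t :=
    hdt.mul hcos
  have h2 : HasDerivAt (fun t => d t * Real.sin (φ₁ t + β t))
      (D * Real.sin (φ₁ t + β t) + d t * (Real.cos (φ₁ t + β t) * (ω₁ t + B))) t :=
    hdt.mul hsin
  have hfx : (fun t => x₀ t - x₁ t) = fun t => d t * Real.cos (φ₁ t + β t) := funext hgx
  have hfy : (fun t => y₀ t - y₁ t) = fun t => d t * Real.sin (φ₁ t + β t) := funext hgy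
  have h1' : HasDerivAt (fun t => d t * Real.cos (φ₁ t + β t))
      (v₀ t * Real.cos (φ₀ t) - v₁ t * Real.cos (φ₁ t)) t := hfx ▸ ((hx₀ t).sub (hx₁ t))
  have h2' : HasDerivAt (fun t => d t * Real.sin (φ₁ t + β t))
      (v₀ t * Real.sin (φ₀ t) - v₁ t * Real.sin (φ₁ t)) t := hfy ▸ ((hy₀ t).sub (hy₁ t))
  have E1 := h1.unique h1'
  have E2 := h2.unique h2'
  have hs1 : Real.sin (β t) =
      Real.sin (φ₁ t + β t) * Real.cos (φ₁ t) - Real.cos (φ₁ t + β t) * Real.sin (φ₁ t) := by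
    have h := Real.sin_sub (φ₁ t + β t) (φ₁ t)
    rw [add_sub_cancel_left] at h
    exact h
  have hs2 : Real.sin ((φ₁ t - φ₀ t) + β t) =
      Real.sin (φ₁ t + β t) * Real.cos (φ₀ t) - Real.cos (φ₁ t + β t) * Real.sin (φ₀ t) := by
    have h := Real.sin_sub (φ₁ t + β t) (φ₀ t)
    rw [show φ₁ t + β t - φ₀ t = (φ₁ t - φ₀ t) + β t by ring] at h
    exact h
  have pyth := Real.sin_sq_add_cos_sq (φ₁ t + β t)
  rw [hs1, hs2]
  have hdne : d t ≠ 0 := ne_of_gt (hdpos t)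
  field_simp
  linear_combination (-(Real.sin (φ₁ t + β t))) * E1 + Real.cos (φ₁ t + β t) * E2 +
    (-(d t * (ω₁ t + B))) * pyth
end

section
/- Let V : [0, ∞) → ℝ be differentiable and let c ∈ ℝ. Suppose that for every t ≥ 0, V(t) > c implies V'(t) < 0. Then V(t) ≤ max{V(0), c} for all t ≥ 0. -/
/-- ultimate-boundedness comparison principle. If V is
differentiable on [0, ∞) and V(t) > c forces V'(t) < 0, then
V(t) ≤ max{V(0), c} for all t ≥ 0. -/
theorem lyapunov_ultimate_bound
    (V V' : ℝ → ℝ) (c : ℝ)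
    (hV : ∀ t, 0 ≤ t → HasDerivWithinAt V (V' t) (Set.Ici (0 : ℝ)) t)
    (hdec : ∀ t, 0 ≤ t → c < V t → V' t < 0) :
    ∀ t, 0 ≤ t → V t ≤ max (V 0) c := by
  intro t ht
  by_contra h
  push_neg at h
  set M := max (V 0) c with hM
  have hcont : ContinuousOn V (Set.Ici (0 : ℝ)) :=
    fun x hx => (hV x hx).continuousWithinAt
  -- the set of points in [0,t] where V ≤ M
  set S : Set ℝ := {s | s ∈ Set.Icc 0 t ∧ V s ≤ M} with hS
  have h0S : (0 : ℝ) ∈ S := ⟨⟨le_refl 0, ht⟩, le_max_left _ _⟩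
  have hSne : S.Nonempty := ⟨0, h0S⟩
  have hSbdd : BddAbove S := ⟨t, fun x hx => hx.1.2⟩
  set s₀ := sSup S with hs₀
  have hs₀mem : s₀ ∈ Set.Icc 0 t := by
    constructor
    · exact le_csSup hSbdd h0S
    · exact csSup_le hSne fun x hx => hx.1.2
  have hScl : IsClosed S := by
    have : S = Set.Icc 0 t ∩ V ⁻¹' Set.Iic M := by
      ext x; simp [hS, Set.mem_setOf_eq, and_comm]
    rw [this]
    exact ContinuousOn.preimage_isClosed_of_isClosed
      (hcont.mono (fun x hx => hx.1)) isClosed_Icc isClosed_Iic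
  have hs₀S : s₀ ∈ S := hScl.csSup_mem hSne hSbdd
  have hVs₀ : V s₀ ≤ M := hs₀S.2
  have hs₀t : s₀ < t := by
    rcases lt_or_eq_of_le hs₀mem.2 with h' | h'
    · exact h'
    · exfalso; rw [h'] at hVs₀; exact absurd hVs₀ (not_le.mpr h)
  -- on (s₀, t], V > M, else contradiction with sSup
  have hgt : ∀ x ∈ Set.Ioo s₀ t, c < V x := by
    intro x hx
    by_contra hVx
    push_neg at hVx
    have hxS : x ∈ S := ⟨⟨le_trans hs₀mem.1 hx.1.le, hx.2.le⟩,
      le_trans hVx (le_max_right _ _)⟩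
    exact absurd (le_csSup hSbdd hxS) (not_le.mpr hx.1)
  have hint : interior (Set.Icc s₀ t) = Set.Ioo s₀ t := interior_Icc
  have hanti : StrictAntiOn V (Set.Icc s₀ t) := by
    apply strictAntiOn_of_hasDerivWithinAt_neg (f' := V') (convex_Icc s₀ t)
    · exact hcont.mono (fun x hx => le_trans hs₀mem.1 hx.1)
    · intro x hx
      rw [hint] at hx ⊢
      exact (hV x (le_trans hs₀mem.1 hx.1.le)).mono
        (fun y hy => le_trans hs₀mem.1 hy.1.le)
    · intro x hx
      rw [hint] at hx
      exact hdec x (le_trans hs₀mem.1 hx.1.le) (hgt x hx)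
  have : V t < V s₀ :=
    hanti ⟨le_refl s₀, hs₀t.le⟩ ⟨hs₀t.le, le_refl t⟩ hs₀t
  linarith
end

section
/- Let a, b, k > 0, let ρ be the performance function ρ(t) = (1 − ρ_∞/max{a,b})e^{−l t} + ρ_∞/max{a,b} with l > 0 and 0 < ρ_∞ < max{a,b}, let 0 < β_con < π/2, let W ≥ 0, and let 0 < T ≤ ∞. Suppose β, w : [0, T) → ℝ satisfy |β(t)| ≤ β_con and |w(t)| ≤ W for all t, and e : [0, T) → ℝ is differentiable with −a·ρ(t) < e(t) < b·ρ(t) for all t ∈ [0, T) and e'(t) = −k·cos(β(t))·ε_{a,b}(e(t)/ρ(t)) + w(t) for all t ∈ [0, T). Then there exist constants ξ̲, ξ̄ with −a < ξ̲ ≤ ξ̄ < b, depending only on a, b, k, l, ρ_∞, β_con, W and e(0) (and in particular not on T), such that ξ̲ ≤ e(t)/ρ(t) ≤ ξ̄ for all t ∈ [0, T). -/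
/-- The transformed error ε_{a,b}(x) = log((1 + x/a)/(1 − x/b)). -/
noncomputable def epsErr (a b x : ℝ) : ℝ := Real.log ((1 + x / a) / (1 - x / b))

/-- The performance function ρ(t) = (1 − ρ_∞/M)e^{−l t} + ρ_∞/M. -/
noncomputable def perfFn (l ρ_inf M t : ℝ) : ℝ :=
  (1 - ρ_inf / M) * Real.exp (-l * t) + ρ_inf / M

lemma epsErr_ge_of {a b E x : ℝ} (ha : 0 < a) (hb : 0 < b) (hE : 0 < E)
    (hx1 : b * (1 - Real.exp (-E)) ≤ x) (hx2 : x < b) : E ≤ epsErr a b x := by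
  have hexp : Real.exp (-E) < 1 := by
    rw [Real.exp_lt_one_iff]; linarith
  have hx0 : 0 ≤ x := le_trans (by nlinarith) hx1
  have h1 : (1:ℝ) ≤ 1 + x / a := by
    have : 0 ≤ x / a := div_nonneg hx0 ha.le
    linarith
  have h2 : 0 < 1 - x / b := by
    have : x / b < 1 := (div_lt_one hb).2 hx2
    linarith
  have h3 : 1 - x / b ≤ Real.exp (-E) := by
    have : 1 - Real.exp (-E) ≤ x / b :=
      (le_div_iff₀ hb).2 (by linarith [mul_comm b (1 - Real.exp (-E))])
    linarith
  rw [epsErr, Real.le_log_iff_exp_le (by positivity)]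
  rw [le_div_iff₀ h2]
  calc Real.exp E * (1 - x / b) ≤ Real.exp E * Real.exp (-E) :=
        mul_le_mul_of_nonneg_left h3 (Real.exp_pos E).le
    _ = 1 := by rw [← Real.exp_add]; simp
    _ ≤ 1 + x / a := h1

lemma epsErr_le_of {a b E x : ℝ} (ha : 0 < a) (hb : 0 < b) (hE : 0 < E)
    (hx1 : x ≤ -(a * (1 - Real.exp (-E)))) (hx2 : -a < x) : epsErr a b x ≤ -E := by
  have hexp : Real.exp (-E) < 1 := by
    rw [Real.exp_lt_one_iff]; linarith
  have hx0 : x ≤ 0 := le_trans hx1 (by nlinarith)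
  have h1 : (1:ℝ) ≤ 1 - x / b := by
    have : x / b ≤ 0 := div_nonpos_of_nonpos_of_nonneg hx0 hb.le
    linarith
  have h2 : 0 < 1 + x / a := by
    have : -1 < x / a := by rw [lt_div_iff₀ ha]; linarith
    linarith
  have h3 : 1 + x / a ≤ Real.exp (-E) := by
    have : x / a ≤ -(1 - Real.exp (-E)) := by
      rw [div_le_iff₀ ha]; nlinarith
    linarith
  have hR : (1 + x / a) / (1 - x / b) ≤ Real.exp (-E) := by
    calc (1 + x / a) / (1 - x / b) ≤ (1 + x / a) / 1 :=
          div_le_div_of_nonneg_left h2.le one_pos h1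
    _ = 1 + x / a := div_one _
    _ ≤ Real.exp (-E) := h3
  rw [epsErr]
  calc Real.log ((1 + x / a) / (1 - x / b)) ≤ Real.log (Real.exp (-E)) :=
        Real.log_le_log (by positivity) hR
    _ = -E := Real.log_exp _

set_option maxHeartbeats 1000000 in
/-- the prescribed-performance closed-loop distance-error
subsystem. The normalized error e(t)/ρ(t) stays in a compact subinterval
[ξ̲, ξ̄] ⊂ (−a, b) whose endpoints depend only on a, b, k, l, ρ_∞, β_con, W
and e(0) — in particular not on T (nor on the particular signals β, w, e). -/
theorem distance_subsystem_uniform_bounds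
    (a b k l ρ_inf β_con W e0 : ℝ)
    (ha : 0 < a) (hb : 0 < b) (hk : 0 < k) (hl : 0 < l)
    (hρ0 : 0 < ρ_inf) (hρ1 : ρ_inf < max a b)
    (hβ0 : 0 < β_con) (hβ1 : β_con < Real.pi / 2) (hW : 0 ≤ W) :
    ∃ ξlo ξhi : ℝ, -a < ξlo ∧ ξlo ≤ ξhi ∧ ξhi < b ∧
      ∀ (T : EReal), 0 < T →
      ∀ (β w e e' : ℝ → ℝ), e 0 = e0 →
        (∀ t : ℝ, 0 ≤ t → (t : EReal) < T → |β t| ≤ β_con) →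
        (∀ t : ℝ, 0 ≤ t → (t : EReal) < T → |w t| ≤ W) →
        (∀ t : ℝ, 0 ≤ t → (t : EReal) < T →
          HasDerivWithinAt e (e' t) {s : ℝ | 0 ≤ s ∧ (s : EReal) < T} t) →
        (∀ t : ℝ, 0 ≤ t → (t : EReal) < T →
          -a * perfFn l ρ_inf (max a b) t < e t ∧
            e t < b * perfFn l ρ_inf (max a b) t) →
        (∀ t : ℝ, 0 ≤ t → (t : EReal) < T →
          e' t = -k * Real.cos (β t) *
              epsErr a b (e t / perfFn l ρ_inf (max a b) t) + w t) →
        ∀ t : ℝ, 0 ≤ t → (t : EReal) < T →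
          ξlo ≤ e t / perfFn l ρ_inf (max a b) t ∧
            e t / perfFn l ρ_inf (max a b) t ≤ ξhi := by
  set M := max a b with hM_def
  have haM : a ≤ M := le_max_left a b
  have hbM : b ≤ M := le_max_right a b
  have hM : 0 < M := lt_of_lt_of_le ha haM
  set r := ρ_inf / M with hr_def
  have hr0 : 0 < r := div_pos hρ0 hM
  have hr1 : r < 1 := (div_lt_one hM).2 hρ1
  have hπ : 0 < Real.pi := Real.pi_pos
  have hc : 0 < Real.cos β_con :=
    Real.cos_pos_of_mem_Ioo ⟨by linarith, hβ1⟩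
  set c := Real.cos β_con with hc_def
  set E := (W + M * l + 1) / (k * c) with hE_def
  have hE : 0 < E := div_pos (by positivity) (by positivity)
  have hkcE : k * c * E = W + M * l + 1 := by
    rw [hE_def]; field_simp
  have hexp1 : Real.exp (-E) < 1 := by rw [Real.exp_lt_one_iff]; linarith
  have hexp0 : 0 < Real.exp (-E) := Real.exp_pos _
  set ξhi := if e0 < b then max e0 (b * (1 - Real.exp (-E))) else b * (1 - Real.exp (-E))
    with hhi_def
  set ξlo := if -a < e0 then min e0 (-(a * (1 - Real.exp (-E)))) else
    -(a * (1 - Real.exp (-E))) with hlo_def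
  have hhiB : b * (1 - Real.exp (-E)) ≤ ξhi := by
    rw [hhi_def]; split_ifs; exacts [le_max_right _ _, le_rfl]
  have hhib : ξhi < b := by
    have h1 : b * (1 - Real.exp (-E)) < b := by
      nlinarith only [mul_pos hb hexp0]
    rw [hhi_def]; split_ifs with h
    · exact max_lt h h1
    · exact h1
  have hloB : ξlo ≤ -(a * (1 - Real.exp (-E))) := by
    rw [hlo_def]; split_ifs; exacts [min_le_right _ _, le_rfl]
  have hloa : -a < ξlo := by
    have h1 : -a < -(a * (1 - Real.exp (-E))) := by
      nlinarith only [mul_pos ha hexp0]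
    rw [hlo_def]; split_ifs with h
    · exact lt_min h h1
    · exact h1
  have hhi0 : 0 ≤ ξhi :=
    le_trans (mul_nonneg hb.le (by linarith only [hexp1])) hhiB
  have hlo0 : ξlo ≤ 0 :=
    le_trans hloB (neg_nonpos.2 (mul_nonneg ha.le (by linarith only [hexp1])))
  refine ⟨ξlo, ξhi, hloa, le_trans hlo0 hhi0, hhib, ?_⟩
  intro T hT β w e e' he0 hβ hw hder hbnd heqd t ht0 htT
  set P := fun s : ℝ => perfFn l ρ_inf M s with hP_def
  set Pd := fun s : ℝ => (1 - r) * (-l * Real.exp (-l * s)) with hPd_def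
  have hP_eq : ∀ s : ℝ, P s = (1 - r) * Real.exp (-l * s) + r := by
    intro s
    simp only [hP_def, perfFn, hr_def]
  have hP_pos : ∀ s : ℝ, 0 < P s := by
    intro s
    have h : 0 < (1 - r) * Real.exp (-l * s) :=
      mul_pos (by linarith only [hr1]) (Real.exp_pos (-l * s))
    rw [hP_eq]; linarith only [h, hr0]
  have hP_le1 : ∀ s : ℝ, 0 ≤ s → P s ≤ 1 := by
    intro s hs
    have h : Real.exp (-l * s) ≤ 1 :=
      Real.exp_le_one_iff.2 (by nlinarith only [mul_nonneg hl.le hs])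
    have h2 : (1 - r) * Real.exp (-l * s) ≤ (1 - r) * 1 :=
      mul_le_mul_of_nonneg_left h (by linarith only [hr1])
    rw [hP_eq]; linarith only [h2]
  have hPd1 : ∀ s : ℝ, 0 ≤ s → 0 ≤ -Pd s := by
    intro s hs
    have h0 := (Real.exp_pos (-l * s)).le
    have h1 : 0 ≤ (1 - r) * l * Real.exp (-l * s) :=
      mul_nonneg (mul_nonneg (by linarith only [hr1]) hl.le) h0
    rw [hPd_def]; simp only; nlinarith only [h1]
  have hPd2 : ∀ s : ℝ, 0 ≤ s → -Pd s ≤ l := by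
    intro s hs
    have h : Real.exp (-l * s) ≤ 1 :=
      Real.exp_le_one_iff.2 (by nlinarith only [mul_nonneg hl.le hs])
    have h0 := (Real.exp_pos (-l * s)).le
    have h1 : (1 - r) * Real.exp (-l * s) ≤ 1 * 1 :=
      mul_le_mul (by linarith only [hr0]) h h0 one_pos.le
    have h2 : l * ((1 - r) * Real.exp (-l * s)) ≤ l * (1 * 1) :=
      mul_le_mul_of_nonneg_left h1 hl.le
    rw [hPd_def]; simp only; nlinarith only [h2]
  have hP_deriv : ∀ s : ℝ, HasDerivAt P (Pd s) s := by
    intro s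
    have h1 : HasDerivAt (fun u : ℝ => -l * u) (-l) s := by
      simpa using (hasDerivAt_id s).const_mul (-l)
    have h2 : HasDerivAt (fun u : ℝ => Real.exp (-l * u))
        (Real.exp (-l * s) * -l) s := h1.exp
    have h3 : HasDerivAt (fun u : ℝ => (1 - r) * Real.exp (-l * u) + r)
        ((1 - r) * (Real.exp (-l * s) * -l)) s := (h2.const_mul (1 - r)).add_const r
    have hPfun : P = fun u : ℝ => (1 - r) * Real.exp (-l * u) + r :=
      funext fun u => hP_eq u
    rw [hPfun]
    convert h3 using 1
    rw [hPd_def]; ring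
  have hT0 : ((0:ℝ) : EReal) < T := by
    simpa using hT
  -- the set where hypotheses hold
  have hmemS : ∀ x : ℝ, 0 ≤ x → x < t → {s : ℝ | 0 ≤ s ∧ (s : EReal) < T} ∈ nhdsWithin x (Set.Ici x) := by
    intro x hx0 hxt
    rw [mem_nhdsWithin]
    refine ⟨Set.Iio t, isOpen_Iio, hxt, ?_⟩
    rintro s ⟨hs1, hs2⟩
    exact ⟨le_trans hx0 hs2, lt_trans (EReal.coe_lt_coe_iff.2 hs1) htT⟩
  have hIccS : Set.Icc (0:ℝ) t ⊆ {s : ℝ | 0 ≤ s ∧ (s : EReal) < T} := by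
    rintro s ⟨hs1, hs2⟩
    exact ⟨hs1, lt_of_le_of_lt (EReal.coe_le_coe_iff.2 hs2) htT⟩
  have hcontE : ContinuousOn e (Set.Icc 0 t) := by
    intro x hx
    have hxS := hIccS hx
    exact ((hder x hxS.1 hxS.2).continuousWithinAt).mono hIccS
  have hcontP : ContinuousOn P (Set.Icc 0 t) := fun x _ =>
    (hP_deriv x).continuousAt.continuousWithinAt
  have hcontf : ContinuousOn (fun s => e s / P s) (Set.Icc 0 t) :=
    hcontE.div hcontP fun x _ => (hP_pos x).ne'
  set f' : ℝ → ℝ := fun s => (e' s * P s - e s * Pd s) / (P s) ^ 2 with hf'_def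
  have hfderiv : ∀ x ∈ Set.Ico (0:ℝ) t,
      HasDerivWithinAt (fun s => e s / P s) (f' x) (Set.Ici x) x := by
    rintro x ⟨hx0, hxt⟩
    have hxT : (x : EReal) < T := lt_trans (EReal.coe_lt_coe_iff.2 hxt) htT
    have hex : HasDerivWithinAt e (e' x) (Set.Ici x) x :=
      (hder x hx0 hxT).mono_of_mem_nhdsWithin (hmemS x hx0 hxt)
    exact hex.div ((hP_deriv x).hasDerivWithinAt) (hP_pos x).ne'
  have hP0 : P 0 = 1 := by rw [hP_eq]; simp
  have hP0' : perfFn l ρ_inf M 0 = 1 := hP0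
  have he0bnd := hbnd 0 le_rfl hT0
  rw [he0, hP0'] at he0bnd
  have he0b : e0 < b := by linarith only [he0bnd.2]
  have he0a : -a < e0 := by linarith only [he0bnd.1]
  have hf0 : e 0 / P 0 = e0 := by rw [hP0, he0, div_one]
  -- common facts at boundary points
  have hcos : ∀ x : ℝ, 0 ≤ x → (x : EReal) < T → c ≤ Real.cos (β x) := by
    intro x hx0 hxT
    have h1 : Real.cos β_con ≤ Real.cos |β x| :=
      Real.cos_le_cos_of_nonneg_of_le_pi (abs_nonneg _) (by linarith) (hβ x hx0 hxT)
    rwa [Real.cos_abs] at h1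
  -- upper bound via fencing
  have keyhi : ∀ x ∈ Set.Icc (0:ℝ) t, e x / P x ≤ ξhi := by
    refine image_le_of_deriv_right_lt_deriv_boundary (f := fun s => e s / P s)
      (f' := f') (B := fun _ => ξhi) (B' := fun _ => 0)
      hcontf hfderiv ?_ (fun x => hasDerivAt_const x ξhi) ?_
    · show e 0 / P 0 ≤ ξhi
      rw [hf0, hhi_def, if_pos he0b]
      exact le_max_left _ _
    · rintro x ⟨hx0, hxt⟩ hfx
      have hxT : (x : EReal) < T := lt_trans (EReal.coe_lt_coe_iff.2 hxt) htT
      have hPx := hP_pos x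
      have hPle := hP_le1 x hx0
      have hpd1 := hPd1 x hx0
      have hpd2 := hPd2 x hx0
      have hfx' : e x / perfFn l ρ_inf M x = ξhi := hfx
      have hex : e x = ξhi * P x := (div_eq_iff hPx.ne').1 hfx'
      have heps : E ≤ epsErr a b ξhi := epsErr_ge_of ha hb hE hhiB hhib
      have hcosx := hcos x hx0 hxT
      have hwx : w x ≤ W := (abs_le.1 (hw x hx0 hxT)).2
      have heq' : e' x = -k * Real.cos (β x) * epsErr a b ξhi + w x := by
        rw [heqd x hx0 hxT, hfx']
      have hprod : W + M * l + 1 ≤ k * Real.cos (β x) * epsErr a b ξhi := by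
        rw [← hkcE]
        have h1 : c * E ≤ Real.cos (β x) * epsErr a b ξhi :=
          mul_le_mul hcosx heps hE.le (hc.le.trans hcosx)
        nlinarith only [mul_le_mul_of_nonneg_left h1 hk.le]
      have he' : e' x ≤ -(M * l + 1) := by
        rw [heq']; nlinarith only [hprod, hwx]
      have hmul : ξhi * -Pd x ≤ M * l :=
        mul_le_mul (le_of_lt (lt_of_lt_of_le hhib hbM)) hpd2 hpd1 hM.le
      have h5 : e' x - ξhi * Pd x ≤ -1 := by nlinarith only [he', hmul]
      have h6 : e' x * P x - e x * Pd x < 0 := by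
        rw [hex]
        nlinarith only [mul_le_mul_of_nonneg_left h5 hPx.le, hPx]
      show (e' x * P x - e x * Pd x) / P x ^ 2 < 0
      exact div_neg_of_neg_of_pos h6 (by positivity)
  -- lower bound via fencing on the negative
  have keylo : ∀ x ∈ Set.Icc (0:ℝ) t, -(e x / P x) ≤ -ξlo := by
    refine image_le_of_deriv_right_lt_deriv_boundary (f := fun s => -(e s / P s))
      (f' := fun s => -(f' s)) (B := fun _ => -ξlo) (B' := fun _ => 0)
      hcontf.neg (fun x hx => (hfderiv x hx).neg) ?_
      (fun x => hasDerivAt_const x (-ξlo)) ?_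
    · show -(e 0 / P 0) ≤ -ξlo
      rw [hf0]
      have h7 : ξlo ≤ e0 := by
        rw [hlo_def, if_pos he0a]; exact min_le_left _ _
      linarith only [h7]
    · rintro x ⟨hx0, hxt⟩ hgx
      have hfx' : e x / perfFn l ρ_inf M x = ξlo := neg_injective hgx
      have hxT : (x : EReal) < T := lt_trans (EReal.coe_lt_coe_iff.2 hxt) htT
      have hPx := hP_pos x
      have hPle := hP_le1 x hx0
      have hpd1 := hPd1 x hx0
      have hpd2 := hPd2 x hx0
      have hex : e x = ξlo * P x := (div_eq_iff hPx.ne').1 hfx'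
      have heps : epsErr a b ξlo ≤ -E := epsErr_le_of ha hb hE hloB hloa
      have hcosx := hcos x hx0 hxT
      have hwx : -W ≤ w x := (abs_le.1 (hw x hx0 hxT)).1
      have heq' : e' x = -k * Real.cos (β x) * epsErr a b ξlo + w x := by
        rw [heqd x hx0 hxT, hfx']
      have hprod : W + M * l + 1 ≤ k * Real.cos (β x) * -(epsErr a b ξlo) := by
        rw [← hkcE]
        have h1 : c * E ≤ Real.cos (β x) * -(epsErr a b ξlo) :=
          mul_le_mul hcosx (by linarith only [heps]) hE.le (hc.le.trans hcosx)
        nlinarith only [mul_le_mul_of_nonneg_left h1 hk.le]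
      have he' : M * l + 1 ≤ e' x := by
        rw [heq']; nlinarith only [hprod, hwx]
      have hmul : -ξlo * -Pd x ≤ M * l :=
        mul_le_mul (by linarith only [hloa, haM]) hpd2 hpd1 hM.le
      have h5 : 1 ≤ e' x - ξlo * Pd x := by nlinarith only [he', hmul]
      have h6 : 0 < e' x * P x - e x * Pd x := by
        rw [hex]
        nlinarith only [mul_le_mul_of_nonneg_left h5 hPx.le, hPx]
      show -((e' x * P x - e x * Pd x) / P x ^ 2) < 0
      have h8 : 0 < (e' x * P x - e x * Pd x) / P x ^ 2 := div_pos h6 (by positivity)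
      linarith only [h8]
  have hmem : t ∈ Set.Icc (0:ℝ) t := ⟨ht0, le_rfl⟩
  exact ⟨by linarith only [keylo t hmem], keyhi t hmem⟩
end

section
/- Let M, k > 0, let ρ be the performance function ρ(t) = (1 − ρ_∞/M)e^{−l t} + ρ_∞/M with l > 0 and 0 < ρ_∞ < M, let W ≥ 0, and let 0 < T ≤ ∞. Suppose w : [0, T) → ℝ satisfies |w(t)| ≤ W for all t, and e : [0, T) → ℝ is differentiable with |e(t)| < M·ρ(t) for all t ∈ [0, T), satisfying e'(t) = −(k/ρ(t))·r_{M,M}(ξ(t))·ε_{M,M}(ξ(t)) + w(t) for all t ∈ [0, T), where ξ(t) = e(t)/ρ(t). Then, with ε̄ = max{|ε_{M,M}(ξ(0))|, M·(W + l·M)/(2k)}, one has |ε_{M,M}(ξ(t))| ≤ ε̄ and |ξ(t)| ≤ M·(e^{ε̄} − 1)/(e^{ε̄} + 1) < M for all t ∈ [0, T). -/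
open Topology

/-- The gain function r_{a,b}(x) = (1/a + 1/b)/((1 + x/a)(1 − x/b)). -/
noncomputable def gainFn (a b x : ℝ) : ℝ :=
  (1 / a + 1 / b) / ((1 + x / a) * (1 - x / b))

/-! ### Auxiliary lemmas -/

def domSet (T : EReal) : Set ℝ := {s : ℝ | 0 ≤ s ∧ (s : EReal) < T}

lemma mem_domSet {T : EReal} {x : ℝ} : x ∈ domSet T ↔ 0 ≤ x ∧ (x : EReal) < T := Iff.rfl

lemma pos_aux (M u : ℝ) (hM : 0 < M) (hu : |u| < M) : 0 < 1 + u / M ∧ 0 < 1 - u / M := by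
  rw [abs_lt] at hu
  constructor
  · have : -1 < u / M := by rw [lt_div_iff₀ hM]; linarith [hu.1]
    linarith
  · have : u / M < 1 := by rw [div_lt_iff₀ hM]; linarith [hu.2]
    linarith

lemma lt_abs_of_sq (a b : ℝ) (ha : 0 ≤ a) (h : a ^ 2 < b ^ 2) : a < |b| := by
  by_contra hc
  push_neg at hc
  nlinarith [sq_abs b, abs_nonneg b]

lemma xi_of_eps (M u E : ℝ) (hM : 0 < M) (hu : |u| < M) (hE : |epsErr M M u| ≤ E) :
    |u| ≤ M * (Real.exp E - 1) / (Real.exp E + 1) := by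
  obtain ⟨hu1, hu2⟩ := pos_aux M u hM hu
  set q : ℝ := (1 + u / M) / (1 - u / M) with hq
  have hqpos : 0 < q := div_pos hu1 hu2
  have hElog : |Real.log q| ≤ E := hE
  rw [abs_le] at hElog
  set Z : ℝ := Real.exp E with hZ
  have hZpos : 0 < Z := Real.exp_pos E
  have hq2 : q ≤ Z := by
    calc q = Real.exp (Real.log q) := (Real.exp_log hqpos).symm
    _ ≤ Z := Real.exp_le_exp.2 hElog.2
  have hq1 : 1 ≤ q * Z := by
    have h1 : Real.exp (-E) ≤ q := by
      calc Real.exp (-E) ≤ Real.exp (Real.log q) := Real.exp_le_exp.2 (by linarith [hElog.1])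
      _ = q := Real.exp_log hqpos
    have h2 : Real.exp (-E) * Z = 1 := by
      rw [hZ, ← Real.exp_add]; simp
    nlinarith
  have hk : q * (1 - u / M) = 1 + u / M := div_mul_cancel₀ _ (ne_of_gt hu2)
  have hk' : q * (M - u) = M + u := by
    have hM' : (M : ℝ) ≠ 0 := ne_of_gt hM
    field_simp at hk
    linarith
  have hu_eq : u = M * (q - 1) / (q + 1) := by
    rw [eq_div_iff (ne_of_gt (by positivity : (0:ℝ) < q + 1))]
    linear_combination -hk'
  rw [hu_eq, abs_div, abs_of_pos (by positivity : (0:ℝ) < q + 1),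
    div_le_div_iff₀ (by positivity) (by positivity : (0:ℝ) < Z + 1)]
  rcases abs_cases (M * (q - 1)) with ⟨h, _⟩ | ⟨h, _⟩ <;> rw [h] <;>
    nlinarith [mul_le_mul_of_nonneg_left hq2 hM.le, mul_le_mul_of_nonneg_left hq1 hM.le]

lemma strict_M (M E : ℝ) (hM : 0 < M) : M * (Real.exp E - 1) / (Real.exp E + 1) < M := by
  rw [div_lt_iff₀ (by positivity : (0:ℝ) < Real.exp E + 1)]
  nlinarith [Real.exp_pos E]

lemma perf_pos (M l ρ_inf : ℝ) (hM : 0 < M) (hρ0 : 0 < ρ_inf) (hρ1 : ρ_inf < M) (t : ℝ) :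
    0 < perfFn l ρ_inf M t := by
  have h1 : ρ_inf / M < 1 := (div_lt_one hM).2 hρ1
  have h2 : 0 < ρ_inf / M := div_pos hρ0 hM
  have := Real.exp_pos (-l * t)
  unfold perfFn; nlinarith

lemma perf_le_one (M l ρ_inf : ℝ) (hM : 0 < M) (hρ1 : ρ_inf < M) (hl : 0 < l)
    (t : ℝ) (ht : 0 ≤ t) : perfFn l ρ_inf M t ≤ 1 := by
  have h1 : ρ_inf / M < 1 := (div_lt_one hM).2 hρ1
  have h3 : Real.exp (-l * t) ≤ 1 := Real.exp_le_one_iff.2 (by nlinarith)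
  have := Real.exp_pos (-l * t)
  unfold perfFn; nlinarith

lemma perf_deriv (M l ρ_inf : ℝ) (t : ℝ) :
    HasDerivAt (perfFn l ρ_inf M)
      ((1 - ρ_inf / M) * (Real.exp (-l * t) * -l)) t := by
  have h1 : HasDerivAt (fun s : ℝ => -l * s) (-l) t := by
    simpa using (hasDerivAt_id t).const_mul (-l)
  have h2 : HasDerivAt (fun s : ℝ => Real.exp (-l * s)) (Real.exp (-l * t) * -l) t :=
    (Real.hasDerivAt_exp (-l * t)).comp t h1
  exact (h2.const_mul (1 - ρ_inf / M)).add_const (ρ_inf / M)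

lemma perf_deriv_bound (M l ρ_inf : ℝ) (hM : 0 < M) (hρ0 : 0 < ρ_inf) (hρ1 : ρ_inf < M)
    (hl : 0 < l) (t : ℝ) (ht : 0 ≤ t) :
    |(1 - ρ_inf / M) * (Real.exp (-l * t) * -l)| ≤ l := by
  have h1 : ρ_inf / M < 1 := (div_lt_one hM).2 hρ1
  have h2 : 0 < ρ_inf / M := div_pos hρ0 hM
  have h3 : Real.exp (-l * t) ≤ 1 := Real.exp_le_one_iff.2 (by nlinarith)
  have h4 := Real.exp_pos (-l * t)
  have h5 : (1 - ρ_inf / M) * Real.exp (-l * t) ≤ 1 := by nlinarith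
  have h6 : 0 ≤ (1 - ρ_inf / M) * Real.exp (-l * t) := by nlinarith
  rw [abs_le]
  constructor
  · nlinarith [mul_le_mul_of_nonneg_right h5 hl.le]
  · nlinarith [mul_le_mul_of_nonneg_right h5 hl.le]

lemma eps_hasDeriv (M : ℝ) (hM : 0 < M) (S : Set ℝ) (ξ : ℝ → ℝ) (ξd : ℝ) (t : ℝ)
    (hd : HasDerivWithinAt ξ ξd S t) (hξS : ∀ s ∈ S, |ξ s| < M) (htS : t ∈ S) :
    HasDerivWithinAt (fun s => epsErr M M (ξ s)) (gainFn M M (ξ t) * ξd) S t := by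
  obtain ⟨hu1, hu2⟩ := pos_aux M (ξ t) hM (hξS t htS)
  have h1 : HasDerivWithinAt (fun s => 1 + ξ s / M) (ξd / M) S t :=
    (hd.div_const M).const_add 1
  have hl1 : HasDerivWithinAt (fun s => Real.log (1 + ξ s / M))
      ((1 + ξ t / M)⁻¹ * (ξd / M)) S t := by
    simpa [Function.comp_def] using
      (Real.hasDerivAt_log (ne_of_gt hu1)).comp_hasDerivWithinAt t h1
  have h2 : HasDerivWithinAt (fun s => 1 - ξ s / M) (-(ξd / M)) S t :=
    (hd.div_const M).const_sub 1
  have hl2 : HasDerivWithinAt (fun s => Real.log (1 - ξ s / M))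
      ((1 - ξ t / M)⁻¹ * -(ξd / M)) S t := by
    simpa [Function.comp_def] using
      (Real.hasDerivAt_log (ne_of_gt hu2)).comp_hasDerivWithinAt t h2
  have hsub := hl1.sub hl2
  have heq2 : ∀ s ∈ S, Real.log (1 + ξ s / M) - Real.log (1 - ξ s / M)
      = epsErr M M (ξ s) := by
    intro s hs
    obtain ⟨a1, a2⟩ := pos_aux M (ξ s) hM (hξS s hs)
    rw [epsErr, Real.log_div (ne_of_gt a1) (ne_of_gt a2)]
  have hres := hsub.congr (fun s hs => (heq2 s hs).symm) ((heq2 t htS).symm)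
  refine hres.congr_deriv ?_
  have hMne : (M : ℝ) ≠ 0 := ne_of_gt hM
  have hu := hξS t htS
  rw [abs_lt] at hu
  have h1' : (0:ℝ) < M + ξ t := by linarith [hu.1]
  have h2' : (0:ℝ) < M - ξ t := by linarith [hu.2]
  have ha : 1 + ξ t / M = (M + ξ t) / M := by field_simp
  have hb : 1 - ξ t / M = (M - ξ t) / M := by field_simp
  rw [gainFn, ha, hb]
  field_simp [ne_of_gt h1', ne_of_gt h2']
  ring

lemma gain_facts (M u : ℝ) (hM : 0 < M) (hu : |u| < M) :
    0 < gainFn M M u ∧ 2 / M ≤ gainFn M M u := by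
  obtain ⟨hu1, hu2⟩ := pos_aux M u hM hu
  have hP : 0 < (1 + u / M) * (1 - u / M) := mul_pos hu1 hu2
  have hP1 : (1 + u / M) * (1 - u / M) ≤ 1 := by nlinarith [sq_nonneg (u / M)]
  constructor
  · exact div_pos (by positivity) hP
  · rw [gainFn, le_div_iff₀ hP, div_mul_eq_mul_div, div_le_iff₀ hM]
    have hMM : (1 / M + 1 / M) * M = 2 := by field_simp; ring
    rw [hMM]
    nlinarith

lemma derivNegAux (M k l W εbar u p pd wt ε r : ℝ)
    (hM : 0 < M) (hk : 0 < k) (hl : 0 < l) (hW : 0 ≤ W)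
    (hu : |u| < M) (hp : 0 < p) (hp1 : p ≤ 1) (hpd : |pd| ≤ l) (hwt : |wt| ≤ W)
    (hrpos : 0 < r) (hr2 : 2 / M ≤ r)
    (hεb : M * (W + l * M) / (2 * k) ≤ εbar) (hgt : εbar < |ε|) :
    2 * ε * (r * (((-(k / p) * r * ε + wt) * p - u * p * pd) / p ^ 2)) < 0 := by
  set A := |ε| with hA
  have hA2 : A ^ 2 = ε ^ 2 := sq_abs ε
  have hεbpos : 0 < M * (W + l * M) / (2 * k) :=
    div_pos (mul_pos hM (by nlinarith)) (by linarith)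
  have hA0 : 0 < A := lt_trans (lt_of_lt_of_le hεbpos hεb) hgt
  have h2k : M * (W + l * M) ≤ εbar * (2 * k) := (div_le_iff₀ (by linarith)).1 hεb
  have hB : (-(k / p) * r * ε + wt) * p - u * p * pd
      = -(k * r * ε) + wt * p - u * p * pd := by
    field_simp
  have h1 : ε * (wt * p) ≤ A * W := by
    have hwp : |wt| * p ≤ W := by nlinarith [abs_nonneg wt]
    calc ε * (wt * p) ≤ |ε * (wt * p)| := le_abs_self _
    _ = A * (|wt| * p) := by rw [abs_mul, abs_mul, abs_of_pos hp]
    _ ≤ A * W := mul_le_mul_of_nonneg_left hwp (abs_nonneg ε)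
  have h2 : -(ε * (u * p * pd)) ≤ A * (M * l) := by
    have hup : |u| * p ≤ M := by nlinarith [abs_nonneg u]
    have hupd : |u| * p * |pd| ≤ M * l :=
      mul_le_mul hup hpd (abs_nonneg pd) hM.le
    calc -(ε * (u * p * pd)) ≤ |ε * (u * p * pd)| := neg_le_abs _
    _ = A * (|u| * p * |pd|) := by rw [abs_mul, abs_mul, abs_mul, abs_of_pos hp]
    _ ≤ A * (M * l) := mul_le_mul_of_nonneg_left hupd (abs_nonneg ε)
  have h3 : A * (W + M * l) < k * r * ε ^ 2 := by
    have h4 : k * (2 / M) * A ^ 2 ≤ k * r * ε ^ 2 := by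
      rw [← hA2]
      nlinarith [mul_nonneg (sub_nonneg.2 hr2) (sq_nonneg A)]
    have h5 : A * (W + M * l) < k * (2 / M) * A ^ 2 := by
      rw [show k * (2 / M) * A ^ 2 = 2 * k * A ^ 2 / M by ring, lt_div_iff₀ hM]
      nlinarith [mul_lt_mul_of_pos_left hgt (by linarith : (0:ℝ) < 2 * k)]
    linarith
  have hEB : ε * (-(k * r * ε) + wt * p - u * p * pd) < 0 := by
    have hexp : ε * (-(k * r * ε) + wt * p - u * p * pd)
        = -(k * r * ε ^ 2) + ε * (wt * p) - ε * (u * p * pd) := by ring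
    rw [hexp]
    linarith
  rw [hB, show 2 * ε * (r * ((-(k * r * ε) + wt * p - u * p * pd) / p ^ 2))
      = 2 * r / p ^ 2 * (ε * (-(k * r * ε) + wt * p - u * p * pd)) by ring]
  exact mul_neg_of_pos_of_neg (div_pos (by linarith) (pow_pos hp 2)) hEB

/-- the prescribed-performance closed-loop bearing-error
subsystem. With ε̄ = max{|ε_{M,M}(ξ(0))|, M(W + lM)/(2k)}, the transformed
error satisfies |ε_{M,M}(ξ(t))| ≤ ε̄ and the normalized error satisfies
|ξ(t)| ≤ M(e^{ε̄} − 1)/(e^{ε̄} + 1) < M on [0, T). -/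
theorem bearing_subsystem_bounds
    (M k l ρ_inf W : ℝ)
    (hM : 0 < M) (hk : 0 < k) (hl : 0 < l)
    (hρ0 : 0 < ρ_inf) (hρ1 : ρ_inf < M) (hW : 0 ≤ W)
    (T : EReal) (hT : 0 < T)
    (w e e' ξ : ℝ → ℝ)
    (hξ : ∀ t, ξ t = e t / perfFn l ρ_inf M t)
    (hw : ∀ t : ℝ, 0 ≤ t → (t : EReal) < T → |w t| ≤ W)
    (he : ∀ t : ℝ, 0 ≤ t → (t : EReal) < T →
      HasDerivWithinAt e (e' t) {s : ℝ | 0 ≤ s ∧ (s : EReal) < T} t)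
    (hbound : ∀ t : ℝ, 0 ≤ t → (t : EReal) < T → |e t| < M * perfFn l ρ_inf M t)
    (heq : ∀ t : ℝ, 0 ≤ t → (t : EReal) < T →
      e' t = -(k / perfFn l ρ_inf M t) * gainFn M M (ξ t) * epsErr M M (ξ t) + w t)
    (εbar : ℝ)
    (hεbar : εbar = max |epsErr M M (ξ 0)| (M * (W + l * M) / (2 * k))) :
    ∀ t : ℝ, 0 ≤ t → (t : EReal) < T →
      |epsErr M M (ξ t)| ≤ εbar ∧
      |ξ t| ≤ M * (Real.exp εbar - 1) / (Real.exp εbar + 1) ∧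
      M * (Real.exp εbar - 1) / (Real.exp εbar + 1) < M := by
  have hρpos : ∀ t, 0 < perfFn l ρ_inf M t := perf_pos M l ρ_inf hM hρ0 hρ1
  replace he : ∀ t : ℝ, 0 ≤ t → (t : EReal) < T →
      HasDerivWithinAt e (e' t) (domSet T) t := he
  have hξM : ∀ t ∈ domSet T, |ξ t| < M := by
    intro t ht
    obtain ⟨ht0, htT⟩ := mem_domSet.1 ht
    rw [hξ t, abs_div, abs_of_pos (hρpos t), div_lt_iff₀ (hρpos t)]
    exact hbound t ht0 htT
  set ξd : ℝ → ℝ := fun t =>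
    (e' t * perfFn l ρ_inf M t -
      e t * ((1 - ρ_inf / M) * (Real.exp (-l * t) * -l))) / perfFn l ρ_inf M t ^ 2
    with hξddef
  have hξd : ∀ t ∈ domSet T, HasDerivWithinAt ξ (ξd t) (domSet T) t := by
    intro t ht
    obtain ⟨ht0, htT⟩ := mem_domSet.1 ht
    have hxe : ξ = fun s => e s / perfFn l ρ_inf M s := funext hξ
    rw [hxe, hξddef]
    exact (he t ht0 htT).div ((perf_deriv M l ρ_inf t).hasDerivWithinAt)
      (ne_of_gt (hρpos t))
  have hF : ∀ t ∈ domSet T, HasDerivWithinAt (fun s => epsErr M M (ξ s))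
      (gainFn M M (ξ t) * ξd t) (domSet T) t :=
    fun t ht => eps_hasDeriv M hM (domSet T) ξ (ξd t) t (hξd t ht) hξM ht
  have hg : ∀ t ∈ domSet T, HasDerivWithinAt (fun s => epsErr M M (ξ s) ^ 2)
      (2 * epsErr M M (ξ t) * (gainFn M M (ξ t) * ξd t)) (domSet T) t := by
    intro t ht
    have h := (hF t ht).pow 2
    refine h.congr_deriv ?_
    push_cast
    ring
  have hεbar0 : 0 ≤ εbar := by
    rw [hεbar]; exact le_trans (abs_nonneg _) (le_max_left _ _)
  have hgd_neg : ∀ t ∈ domSet T, εbar < |epsErr M M (ξ t)| →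
      2 * epsErr M M (ξ t) * (gainFn M M (ξ t) * ξd t) < 0 := by
    intro t ht hgt
    obtain ⟨ht0, htT⟩ := mem_domSet.1 ht
    have hu := hξM t ht
    obtain ⟨hrpos, hr2⟩ := gain_facts M (ξ t) hM hu
    have hp := hρpos t
    have hp1 := perf_le_one M l ρ_inf hM hρ1 hl t ht0
    have hpd := perf_deriv_bound M l ρ_inf hM hρ0 hρ1 hl t ht0
    have hwt := hw t ht0 htT
    have het : e t = ξ t * perfFn l ρ_inf M t := by
      rw [hξ t]
      field_simp
    have he't := heq t ht0 htT
    have hεb2 : M * (W + l * M) / (2 * k) ≤ εbar := by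
      rw [hεbar]; exact le_max_right _ _
    have key := derivNegAux M k l W εbar (ξ t) (perfFn l ρ_inf M t)
      ((1 - ρ_inf / M) * (Real.exp (-l * t) * -l)) (w t)
      (epsErr M M (ξ t)) (gainFn M M (ξ t))
      hM hk hl hW hu hp hp1 hpd hwt hrpos hr2 hεb2 hgt
    rw [hξddef]
    simp only
    rw [he't, het]
    exact key
  have main : ∀ t : ℝ, t ∈ domSet T → |epsErr M M (ξ t)| ≤ εbar := by
    intro t₁ ht₁
    by_contra hcon
    push_neg at hcon
    obtain ⟨ht₁0, ht₁T⟩ := mem_domSet.1 ht₁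
    have hIsub : Set.Icc (0:ℝ) t₁ ⊆ domSet T := by
      intro s hs
      exact mem_domSet.2 ⟨hs.1, lt_of_le_of_lt (EReal.coe_le_coe_iff.2 hs.2) ht₁T⟩
    set G : ℝ → ℝ := fun s => epsErr M M (ξ s) ^ 2 with hGdef
    have hgt1 : εbar ^ 2 < G t₁ := by
      simp only [hGdef]
      nlinarith [sq_abs (epsErr M M (ξ t₁)), abs_nonneg (epsErr M M (ξ t₁))]
    have h0dom : (0:ℝ) ∈ domSet T := mem_domSet.2 ⟨le_refl 0, by simpa using hT⟩
    have hg0 : G 0 ≤ εbar ^ 2 := by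
      have h0 : |epsErr M M (ξ 0)| ≤ εbar := by rw [hεbar]; exact le_max_left _ _
      simp only [hGdef]
      nlinarith [sq_abs (epsErr M M (ξ 0)), abs_nonneg (epsErr M M (ξ 0))]
    set c := (G t₁ + εbar ^ 2) / 2 with hcdef
    have hc1 : εbar ^ 2 < c := by rw [hcdef]; linarith
    have hc2 : c < G t₁ := by rw [hcdef]; linarith
    have hgcont : ContinuousOn G (Set.Icc 0 t₁) := fun x hx =>
      ((hg x (hIsub hx)).continuousWithinAt).mono hIsub
    set A := {x ∈ Set.Icc (0:ℝ) t₁ | G x ≤ c} with hAdef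
    have hA0 : (0:ℝ) ∈ A := ⟨⟨le_refl 0, ht₁0⟩, by linarith⟩
    have hAbdd : BddAbove A := ⟨t₁, fun x hx => hx.1.2⟩
    have hAclosed : IsClosed A := by
      have hAeq : A = Set.Icc (0:ℝ) t₁ ∩ G ⁻¹' Set.Iic c := rfl
      rw [hAeq]
      exact hgcont.preimage_isClosed_of_isClosed isClosed_Icc isClosed_Iic
    set s₀ := sSup A with hs₀def
    have hs₀A : s₀ ∈ A := hAclosed.csSup_mem ⟨0, hA0⟩ hAbdd
    have hs₀lt : s₀ < t₁ := by
      rcases lt_or_eq_of_le hs₀A.1.2 with h | h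
      · exact h
      · exfalso; rw [h] at hs₀A; linarith [hs₀A.2]
    have hgtc : ∀ x, s₀ < x → x ≤ t₁ → c < G x := by
      intro x hx1 hx2
      by_contra h
      push_neg at h
      have hxA : x ∈ A := ⟨⟨le_trans hs₀A.1.1 hx1.le, hx2⟩, h⟩
      exact absurd (le_csSup hAbdd hxA) (not_le.2 hx1)
    have hanti : StrictAntiOn G (Set.Icc s₀ t₁) := by
      apply strictAntiOn_of_deriv_neg (convex_Icc _ _)
        (hgcont.mono (Set.Icc_subset_Icc hs₀A.1.1 le_rfl))
      intro x hx
      rw [interior_Icc] at hx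
      have hx0 : (0:ℝ) < x := lt_of_le_of_lt hs₀A.1.1 hx.1
      have hxS : x ∈ domSet T :=
        mem_domSet.2 ⟨hx0.le, lt_trans (EReal.coe_lt_coe_iff.2 hx.2) ht₁T⟩
      have hsub2 : Set.Ioo (0:ℝ) t₁ ⊆ domSet T := fun y hy =>
        mem_domSet.2 ⟨hy.1.le, lt_trans (EReal.coe_lt_coe_iff.2 hy.2) ht₁T⟩
      have hnb : domSet T ∈ 𝓝 x := Filter.mem_of_superset
        (isOpen_Ioo.mem_nhds ⟨hx0, hx.2⟩) hsub2
      have hd := (hg x hxS).hasDerivAt hnb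
      rw [hd.deriv]
      apply hgd_neg x hxS
      have hcx : c < epsErr M M (ξ x) ^ 2 := by
        have := hgtc x hx.1 hx.2.le
        simpa [hGdef] using this
      exact lt_abs_of_sq εbar (epsErr M M (ξ x)) hεbar0 (by linarith)
    have hfinal := hanti (Set.left_mem_Icc.2 hs₀lt.le) (Set.right_mem_Icc.2 hs₀lt.le) hs₀lt
    linarith [hs₀A.2]
  intro t ht0 htT
  have htS : t ∈ domSet T := mem_domSet.2 ⟨ht0, htT⟩
  exact ⟨main t htS, xi_of_eps M (ξ t) εbar hM (hξM t htS) (main t htS),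
    strict_M M εbar hM⟩
end

section
/- Consider a platoon of N ≥ 1 unicycle vehicles indexed i = 1, …, N following a leader indexed 0. Let 0 < d_col < d_{i,des} < d_con for all i, 0 < β_con < π/2, and set M̲_{d_i} = d_{i,des} − d_col, M̄_{d_i} = d_con − d_{i,des}. Let ρ_{d_i}(t) = (1 − ρ_{d,∞}/max{M̲_{d_i}, M̄_{d_i}})e^{−l_d t} + ρ_{d,∞}/max{M̲_{d_i}, M̄_{d_i}} and ρ_{β_i}(t) = (1 − ρ_{β,∞}/β_con)e^{−l_β t} + ρ_{β,∞}/β_con with l_d, l_β > 0, 0 < ρ_{d,∞} < max{M̲_{d_i}, M̄_{d_i}} for all i and 0 < ρ_{β,∞} < β_con. Suppose x_i, y_i, φ_i : [0,∞) → ℝ (i = 0, 1, …, N) are differentiable with x_i'(t) = v_i(t) cos φ_i(t), y_i'(t) = v_i(t) sin φ_i(t), φ_i'(t) = ω_i(t), where v_0, ω_0 are bounded on [0,∞), and for i = 1, …, N there exist differentiable d_i, β_i : [0,∞) → ℝ with d_i(t) > 0, x_{i−1} − x_i = d_i cos(φ_i + β_i), y_{i−1} − y_i = d_i sin(φ_i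 + β_i), and the control laws v_i(t) = k_{d_i}·ε_{M̲_{d_i}, M̄_{d_i}}((d_i(t) − d_{i,des})/ρ_{d_i}(t)) and ω_i(t) = (k_{β_i}/ρ_{β_i}(t))·r_{β_con,β_con}(β_i(t)/ρ_{β_i}(t))·ε_{β_con,β_con}(β_i(t)/ρ_{β_i}(t)) hold with gains k_{d_i}, k_{β_i} > 0. If initially d_col < d_i(0) < d_con and |β_i(0)| < β_con for all i = 1, …, N, then for all t ≥ 0 and all i = 1, …, N: −M̲_{d_i}·ρ_{d_i}(t) < d_i(t) − d_{i,des} < M̄_{d_i}·ρ_{d_i}(t) and −β_con·ρ_{β_i}(t) < β_i(t) < β_con·ρ_{β_i}(t); in particular d_col < d_i(t) < d_con and |β_i(t)| < β_con for all t ≥ 0. -/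
section PlatoonHelpers
open Real Filter Set Topology

lemma perfFn_pos {l ρi M : ℝ} (h0 : 0 < ρi) (h1 : ρi < M) (t : ℝ) :
    0 < perfFn l ρi M t := by
  have hM : 0 < M := h0.trans h1
  have hc0 : 0 < ρi / M := div_pos h0 hM
  have hc1 : ρi / M < 1 := (div_lt_one hM).2 h1
  have := Real.exp_pos (-l * t)
  unfold perfFn; nlinarith

lemma perfFn_le_one {l ρi M : ℝ} (h0 : 0 < ρi) (h1 : ρi < M) (hl : 0 ≤ l)
    {t : ℝ} (ht : 0 ≤ t) : perfFn l ρi M t ≤ 1 := by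
  have hM : 0 < M := h0.trans h1
  have hc0 : 0 < ρi / M := div_pos h0 hM
  have hc1 : ρi / M < 1 := (div_lt_one hM).2 h1
  have hexp : Real.exp (-l * t) ≤ 1 := by
    rw [Real.exp_le_one_iff]; nlinarith
  have := Real.exp_pos (-l * t)
  unfold perfFn; nlinarith

lemma perfFn_hasDerivAt (l ρi M t : ℝ) :
    HasDerivAt (perfFn l ρi M) (-(l * (1 - ρi / M) * Real.exp (-l * t))) t := by
  have h1 : HasDerivAt (fun s : ℝ => -l * s) (-l) t := by
    simpa using (hasDerivAt_id t).const_mul (-l)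
  have h2 := h1.exp
  have h3 := (h2.const_mul (1 - ρi / M)).add_const (ρi / M)
  exact h3.congr_deriv (by ring)

lemma perfFn_deriv_bound {l ρi M : ℝ} (h0 : 0 < ρi) (h1 : ρi < M) (hl : 0 ≤ l)
    {t : ℝ} (ht : 0 ≤ t) : |(-(l * (1 - ρi / M) * Real.exp (-l * t)))| ≤ l := by
  have hM : 0 < M := h0.trans h1
  have hc0 : 0 < ρi / M := div_pos h0 hM
  have hc1 : ρi / M < 1 := (div_lt_one hM).2 h1
  have hexp : Real.exp (-l * t) ≤ 1 := by
    rw [Real.exp_le_one_iff]; nlinarith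
  have he := Real.exp_pos (-l * t)
  have hA : 0 ≤ l * (1 - ρi / M) * Real.exp (-l * t) :=
    mul_nonneg (mul_nonneg hl (by linarith)) he.le
  have hB : l * (1 - ρi / M) * Real.exp (-l * t) ≤ l := by
    have h2 : (1 - ρi / M) * Real.exp (-l * t) ≤ 1 := by nlinarith
    calc l * (1 - ρi / M) * Real.exp (-l * t) = l * ((1 - ρi / M) * Real.exp (-l * t)) := by ring
    _ ≤ l * 1 := mul_le_mul_of_nonneg_left h2 hl
    _ = l := mul_one l
  rw [abs_le]; constructor <;> linarith

lemma perfFn_continuous (l ρi M : ℝ) : Continuous (perfFn l ρi M) := by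
  unfold perfFn; fun_prop

lemma perfFn_zero {l ρi M : ℝ} : perfFn l ρi M 0 = 1 := by
  simp [perfFn]
lemma eps_tendsto_atTop {a b : ℝ} (ha : 0 < a) (hb : 0 < b) {α : Type*}
    {F : Filter α} {u : α → ℝ} (hu : Tendsto u F (𝓝 b))
    (hu' : ∀ᶠ t in F, u t < b) :
    Tendsto (fun t => epsErr a b (u t)) F atTop := by
  have hnum : Tendsto (fun t => 1 + u t / a) F (𝓝 (1 + b / a)) :=
    (hu.div_const a).const_add 1
  have hden : Tendsto (fun t => 1 - u t / b) F (𝓝 0) := by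
    have := (hu.div_const b).const_sub 1
    simpa [div_self hb.ne'] using this
  have hden' : ∀ᶠ t in F, 0 < 1 - u t / b := by
    filter_upwards [hu'] with t ht
    have : u t / b < 1 := (div_lt_one hb).2 ht
    linarith
  have hinv : Tendsto (fun t => (1 - u t / b)⁻¹) F atTop :=
    tendsto_inv_nhdsGT_zero.comp (tendsto_nhdsWithin_iff.2 ⟨hden, hden'⟩)
  have hq : Tendsto (fun t => (1 + u t / a) / (1 - u t / b)) F atTop := by
    simpa [div_eq_mul_inv] using
      Filter.Tendsto.pos_mul_atTop (by positivity) hnum hinv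
  exact Real.tendsto_log_atTop.comp hq

lemma eps_tendsto_atBot {a b : ℝ} (ha : 0 < a) (hb : 0 < b) {α : Type*}
    {F : Filter α} {u : α → ℝ} (hu : Tendsto u F (𝓝 (-a)))
    (hu' : ∀ᶠ t in F, -a < u t) :
    Tendsto (fun t => epsErr a b (u t)) F atBot := by
  have hnum : Tendsto (fun t => 1 + u t / a) F (𝓝 0) := by
    have := (hu.div_const a).const_add 1
    have h2 : (1 : ℝ) + -a / a = 0 := by field_simp; norm_num
    rwa [h2] at this
  have hden : Tendsto (fun t => 1 - u t / b) F (𝓝 (1 - -a / b)) :=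
    (hu.div_const b).const_sub 1
  have hdenpos : (0:ℝ) < 1 - -a / b := by
    have : (0:ℝ) < a / b := by positivity
    rw [neg_div]; linarith
  have hq : Tendsto (fun t => (1 + u t / a) / (1 - u t / b)) F (𝓝 0) := by
    have := hnum.div hden hdenpos.ne'
    rwa [zero_div] at this
  have hq' : ∀ᶠ t in F, 0 < (1 + u t / a) / (1 - u t / b) := by
    have hden' : ∀ᶠ t in F, 0 < 1 - u t / b :=
      hden.eventually (eventually_gt_nhds hdenpos)
    filter_upwards [hu', hden'] with t h1 h2
    have hnum' : 0 < 1 + u t / a := by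
      have h3 := (div_lt_div_iff_of_pos_right ha).2 h1
      rw [neg_div, div_self ha.ne'] at h3
      linarith
    positivity
  exact Real.tendsto_log_nhdsGT_zero.comp
    (tendsto_nhdsWithin_iff.2 ⟨hq, hq'⟩)
lemma gain_tendsto_atTop {a b : ℝ} (ha : 0 < a) (hb : 0 < b) {α : Type*}
    {F : Filter α} {u : α → ℝ}
    (hprod : Tendsto (fun t => (1 + u t / a) * (1 - u t / b)) F (𝓝[>] 0)) :
    Tendsto (fun t => gainFn a b (u t)) F atTop := by
  have hc : (0:ℝ) < 1 / a + 1 / b := by positivity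
  have hinv : Tendsto (fun t => ((1 + u t / a) * (1 - u t / b))⁻¹) F atTop :=
    tendsto_inv_nhdsGT_zero.comp hprod
  have := hinv.const_mul_atTop hc
  simpa [gainFn, div_eq_mul_inv] using this

lemma no_exit_up {g G : ℝ → ℝ} {T : ℝ} (hT : 0 < T)
    (hg : ∀ t ∈ Set.Icc (0:ℝ) T, HasDerivWithinAt g (G t) (Set.Ici 0) t)
    (hneg : ∀ᶠ t in 𝓝[Set.Ico 0 T] T, G t < 0)
    (hlt : ∀ t, 0 ≤ t → t < T → g t < 0) (heq : g T = 0) : False := by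
  rcases Metric.mem_nhdsWithin_iff.1 hneg with ⟨δ, hδ, hsub⟩
  set t0 : ℝ := max (T - δ / 2) (T / 2) with ht0def
  have ht0T : t0 < T := max_lt (by linarith) (by linarith)
  have ht0pos : 0 < t0 := lt_of_lt_of_le (half_pos hT) (le_max_right _ _)
  have hconts : ContinuousOn g (Icc t0 T) := fun t ht =>
    ((hg t ⟨le_trans ht0pos.le ht.1, ht.2⟩).continuousWithinAt).mono
      (fun s hs => le_trans ht0pos.le hs.1)
  have hderiv : ∀ t ∈ interior (Icc t0 T), deriv g t < 0 := by
    rw [interior_Icc]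
    intro t ht
    have h0t : 0 < t := lt_trans ht0pos ht.1
    have hda : HasDerivAt g (G t) t :=
      (hg t ⟨h0t.le, ht.2.le⟩).hasDerivAt (Ici_mem_nhds h0t)
    rw [hda.deriv]
    apply hsub
    refine ⟨?_, h0t.le, ht.2⟩
    have h1 : T - δ / 2 ≤ t0 := le_max_left _ _
    simp only [Metric.mem_ball, Real.dist_eq]
    rw [abs_of_nonpos (by linarith [ht.2])]
    linarith [ht.1]
  have hanti := strictAntiOn_of_deriv_neg (convex_Icc t0 T) hconts hderiv
  have h2 : g T < g t0 := hanti ⟨le_rfl, ht0T.le⟩ ⟨ht0T.le, le_rfl⟩ ht0T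
  have h3 := hlt t0 ht0pos.le ht0T
  linarith

lemma no_exit_down {g G : ℝ → ℝ} {T : ℝ} (hT : 0 < T)
    (hg : ∀ t ∈ Set.Icc (0:ℝ) T, HasDerivWithinAt g (G t) (Set.Ici 0) t)
    (hpos : ∀ᶠ t in 𝓝[Set.Ico 0 T] T, 0 < G t)
    (hgt : ∀ t, 0 ≤ t → t < T → 0 < g t) (heq : g T = 0) : False := by
  apply no_exit_up (g := fun t => -g t) (G := fun t => -G t) hT
  · exact fun t ht => (hg t ht).neg
  · filter_upwards [hpos] with t ht; linarith
  · exact fun t h1 h2 => by have := hgt t h1 h2; simpa using this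
  · simpa using heq

set_option maxHeartbeats 2000000 in
lemma barrier (dcol dcon ddes bc ρdi ρbi ld lβ kd kβ : ℝ)
    (hdcol : 0 < dcol) (h1 : dcol < ddes) (h2 : ddes < dcon)
    (hbc : 0 < bc) (hbc2 : bc < Real.pi / 2)
    (hld : 0 < ld) (hlβ : 0 < lβ)
    (hρdpos0 : 0 < ρdi) (hρd' : ρdi < max (ddes - dcol) (dcon - ddes))
    (hρβ0 : 0 < ρbi) (hρβ' : ρbi < bc)
    (hkd : 0 < kd) (hkβ : 0 < kβ)
    (d β A B V W : ℝ → ℝ)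
    (hAB : ∀ T : ℝ, ∃ C : ℝ, ∀ t ∈ Set.Icc (0:ℝ) T, |A t| ≤ C ∧ |B t| ≤ C)
    (hV : ∀ t, 0 ≤ t → V t = kd * epsErr (ddes - dcol) (dcon - ddes)
      ((d t - ddes) / perfFn ld ρdi (max (ddes - dcol) (dcon - ddes)) t))
    (hW : ∀ t, 0 ≤ t → W t = (kβ / perfFn lβ ρbi bc t) *
      gainFn bc bc (β t / perfFn lβ ρbi bc t) *
      epsErr bc bc (β t / perfFn lβ ρbi bc t))
    (hd' : ∀ t, 0 ≤ t → HasDerivWithinAt d (A t - V t * Real.cos (β t)) (Set.Ici 0) t)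
    (hβ' : ∀ t, 0 ≤ t →
      HasDerivWithinAt β ((B t + V t * Real.sin (β t)) / d t - W t) (Set.Ici 0) t)
    (hinit1 : dcol < d 0) (hinit2 : d 0 < dcon) (hinit3 : |β 0| < bc) :
    ∀ t, 0 ≤ t →
      (-(ddes - dcol) * perfFn ld ρdi (max (ddes - dcol) (dcon - ddes)) t < d t - ddes ∧
        d t - ddes < (dcon - ddes) * perfFn ld ρdi (max (ddes - dcol) (dcon - ddes)) t) ∧
      (-bc * perfFn lβ ρbi bc t < β t ∧ β t < bc * perfFn lβ ρbi bc t) := by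
  obtain ⟨a, ha_def⟩ : ∃ x : ℝ, x = ddes - dcol := ⟨_, rfl⟩
  obtain ⟨b, hb_def⟩ : ∃ x : ℝ, x = dcon - ddes := ⟨_, rfl⟩
  rw [← ha_def, ← hb_def] at hV hρd' ⊢
  obtain ⟨M, hM_def⟩ : ∃ x : ℝ, x = max a b := ⟨_, rfl⟩
  rw [← hM_def] at hV hρd' ⊢
  obtain ⟨ρd, hρd_def⟩ : ∃ f : ℝ → ℝ, f = perfFn ld ρdi M := ⟨_, rfl⟩
  rw [← hρd_def] at hV ⊢
  obtain ⟨ρβ, hρβ_def⟩ : ∃ f : ℝ → ℝ, f = perfFn lβ ρbi bc := ⟨_, rfl⟩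
  rw [← hρβ_def] at hW ⊢
  have ha : 0 < a := by rw [ha_def]; linarith
  have hb : 0 < b := by rw [hb_def]; linarith
  have haM : a ≤ M := by rw [hM_def]; exact le_max_left _ _
  have hbM : b ≤ M := by rw [hM_def]; exact le_max_right _ _
  have hM : 0 < M := lt_of_lt_of_le ha haM
  have hρdpos : ∀ t, 0 < ρd t := by rw [hρd_def]; exact perfFn_pos hρdpos0 hρd'
  have hρβpos : ∀ t, 0 < ρβ t := by rw [hρβ_def]; exact perfFn_pos hρβ0 hρβ'
  have hρdle : ∀ t : ℝ, 0 ≤ t → ρd t ≤ 1 := by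
    rw [hρd_def]; exact fun t ht => perfFn_le_one hρdpos0 hρd' hld.le ht
  have hρβle : ∀ t : ℝ, 0 ≤ t → ρβ t ≤ 1 := by
    rw [hρβ_def]; exact fun t ht => perfFn_le_one hρβ0 hρβ' hlβ.le ht
  have hcρd : Continuous ρd := by rw [hρd_def]; exact perfFn_continuous _ _ _
  have hcρβ : Continuous ρβ := by rw [hρβ_def]; exact perfFn_continuous _ _ _
  have hρdD : ∀ t : ℝ, HasDerivAt ρd (-(ld * (1 - ρdi / M) * Real.exp (-ld * t))) t := by
    rw [hρd_def]; exact fun t => perfFn_hasDerivAt ld ρdi M t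
  have hρβD : ∀ t : ℝ, HasDerivAt ρβ (-(lβ * (1 - ρbi / bc) * Real.exp (-lβ * t))) t := by
    rw [hρβ_def]; exact fun t => perfFn_hasDerivAt lβ ρbi bc t
  have hρdzero : ρd 0 = 1 := by rw [hρd_def]; exact perfFn_zero
  have hρβzero : ρβ 0 = 1 := by rw [hρβ_def]; exact perfFn_zero
  have hcd : ContinuousOn d (Ici 0) := fun t ht =>
    (hd' t ht).differentiableWithinAt.continuousWithinAt
  have hcβ : ContinuousOn β (Ici 0) := fun t ht =>
    (hβ' t ht).differentiableWithinAt.continuousWithinAt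
  -- the four margin functions
  obtain ⟨f1, hf1⟩ : ∃ f : ℝ → ℝ, ∀ t, f t = (d t - ddes) + a * ρd t := ⟨_, fun _ => rfl⟩
  obtain ⟨f2, hf2⟩ : ∃ f : ℝ → ℝ, ∀ t, f t = b * ρd t - (d t - ddes) := ⟨_, fun _ => rfl⟩
  obtain ⟨f3, hf3⟩ : ∃ f : ℝ → ℝ, ∀ t, f t = β t + bc * ρβ t := ⟨_, fun _ => rfl⟩
  obtain ⟨f4, hf4⟩ : ∃ f : ℝ → ℝ, ∀ t, f t = bc * ρβ t - β t := ⟨_, fun _ => rfl⟩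
  -- it suffices to show positivity of the margins
  suffices H : ∀ t, 0 ≤ t → 0 < f1 t ∧ 0 < f2 t ∧ 0 < f3 t ∧ 0 < f4 t by
    intro t ht
    obtain ⟨g1, g2, g3, g4⟩ := H t ht
    rw [hf1] at g1; rw [hf2] at g2; rw [hf3] at g3; rw [hf4] at g4
    refine ⟨⟨by linarith, by linarith⟩, by linarith, by linarith⟩
  by_contra hcon
  push_neg at hcon
  obtain ⟨t₁, ht₁, hbad₁⟩ := hcon
  set S : Set ℝ := {t : ℝ | 0 ≤ t ∧ (f1 t ≤ 0 ∨ f2 t ≤ 0 ∨ f3 t ≤ 0 ∨ f4 t ≤ 0)}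
    with hS_def
  have hSne : S.Nonempty := by
    refine ⟨t₁, ht₁, ?_⟩
    rcases le_or_gt (f1 t₁) 0 with h | h1
    · exact Or.inl h
    rcases le_or_gt (f2 t₁) 0 with h | h2
    · exact Or.inr (Or.inl h)
    rcases le_or_gt (f3 t₁) 0 with h | h3
    · exact Or.inr (Or.inr (Or.inl h))
    rcases le_or_gt (f4 t₁) 0 with h | h4
    · exact Or.inr (Or.inr (Or.inr h))
    exact absurd (hbad₁ h1 h2 h3) (not_le.2 h4)
  have hSbdd : BddBelow S := ⟨0, fun t ht => ht.1⟩
  have hcf1 : ContinuousOn f1 (Ici 0) := by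
    have : f1 = fun t => (d t - ddes) + a * ρd t := funext hf1
    rw [this]
    exact (hcd.sub continuousOn_const).add (continuous_const.mul hcρd).continuousOn
  have hcf2 : ContinuousOn f2 (Ici 0) := by
    have : f2 = fun t => b * ρd t - (d t - ddes) := funext hf2
    rw [this]
    exact (continuous_const.mul hcρd).continuousOn.sub (hcd.sub continuousOn_const)
  have hcf3 : ContinuousOn f3 (Ici 0) := by
    have : f3 = fun t => β t + bc * ρβ t := funext hf3
    rw [this]
    exact hcβ.add (continuous_const.mul hcρβ).continuousOn
  have hcf4 : ContinuousOn f4 (Ici 0) := by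
    have : f4 = fun t => bc * ρβ t - β t := funext hf4
    rw [this]
    exact (continuous_const.mul hcρβ).continuousOn.sub hcβ
  have hSclosed : IsClosed S := by
    have hrw : S = (Ici 0 ∩ f1 ⁻¹' Iic 0) ∪ ((Ici 0 ∩ f2 ⁻¹' Iic 0) ∪
        ((Ici 0 ∩ f3 ⁻¹' Iic 0) ∪ (Ici 0 ∩ f4 ⁻¹' Iic 0))) := by
      ext t
      simp only [hS_def, mem_setOf_eq, mem_union, mem_inter_iff, mem_preimage,
        mem_Iic, mem_Ici]
      tauto
    rw [hrw]
    exact ((hcf1.preimage_isClosed_of_isClosed isClosed_Ici isClosed_Iic).union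
      ((hcf2.preimage_isClosed_of_isClosed isClosed_Ici isClosed_Iic).union
        ((hcf3.preimage_isClosed_of_isClosed isClosed_Ici isClosed_Iic).union
          (hcf4.preimage_isClosed_of_isClosed isClosed_Ici isClosed_Iic))))
  set T : ℝ := sInf S with hT_def
  have hTS : T ∈ S := hSclosed.csInf_mem hSne hSbdd
  have hT0 : 0 ≤ T := hTS.1
  have h0good : 0 < f1 0 ∧ 0 < f2 0 ∧ 0 < f3 0 ∧ 0 < f4 0 := by
    have hz : ρd 0 = 1 := hρdzero
    have hz' : ρβ 0 = 1 := hρβzero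
    have habs := abs_lt.1 hinit3
    rw [hf1, hf2, hf3, hf4, hz, hz']
    refine ⟨by rw [ha_def]; linarith, by rw [hb_def]; linarith,
      by linarith [habs.1], by linarith [habs.2]⟩
  have hTpos : 0 < T := by
    rcases hT0.lt_or_eq with h | h
    · exact h
    · exfalso
      rcases hTS.2 with h' | h' | h' | h' <;> rw [← h] at h' <;> linarith [h0good.1,
        h0good.2.1, h0good.2.2.1, h0good.2.2.2]
  have hgood : ∀ t, 0 ≤ t → t < T → 0 < f1 t ∧ 0 < f2 t ∧ 0 < f3 t ∧ 0 < f4 t := by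
    intro t h0 hltT
    by_contra hc
    have hmem : t ∈ S := by
      refine ⟨h0, ?_⟩
      rcases le_or_gt (f1 t) 0 with h | h1
      · exact Or.inl h
      rcases le_or_gt (f2 t) 0 with h | h2
      · exact Or.inr (Or.inl h)
      rcases le_or_gt (f3 t) 0 with h | h3
      · exact Or.inr (Or.inr (Or.inl h))
      rcases le_or_gt (f4 t) 0 with h | h4
      · exact Or.inr (Or.inr (Or.inr h))
      exact (hc ⟨h1, h2, h3, h4⟩).elim
    exact absurd (csInf_le hSbdd hmem) (not_le.2 hltT)
  haveI hFne : (𝓝[Ico (0:ℝ) T] T).NeBot := by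
    rw [← mem_closure_iff_nhdsWithin_neBot, closure_Ico hTpos.ne]
    exact mem_Icc.mpr ⟨hT0, le_rfl⟩
  have hmemF : ∀ᶠ t in 𝓝[Ico (0:ℝ) T] T, t ∈ Ico (0:ℝ) T := eventually_mem_nhdsWithin
  have htendd : Tendsto d (𝓝[Ico (0:ℝ) T] T) (𝓝 (d T)) :=
    (hcd T hT0).mono Ico_subset_Ici_self
  have htendβ : Tendsto β (𝓝[Ico (0:ℝ) T] T) (𝓝 (β T)) :=
    (hcβ T hT0).mono Ico_subset_Ici_self
  have htendρd : Tendsto ρd (𝓝[Ico (0:ℝ) T] T) (𝓝 (ρd T)) :=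
    (hcρd.tendsto T).mono_left nhdsWithin_le_nhds
  have htendρβ : Tendsto ρβ (𝓝[Ico (0:ℝ) T] T) (𝓝 (ρβ T)) :=
    (hcρβ.tendsto T).mono_left nhdsWithin_le_nhds
  have hf1T : 0 ≤ f1 T := ge_of_tendsto (((hcf1 T hT0).mono Ico_subset_Ici_self))
    (by filter_upwards [hmemF] with t ht; exact (hgood t ht.1 ht.2).1.le)
  have hf2T : 0 ≤ f2 T := ge_of_tendsto (((hcf2 T hT0).mono Ico_subset_Ici_self))
    (by filter_upwards [hmemF] with t ht; exact (hgood t ht.1 ht.2).2.1.le)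
  have hf3T : 0 ≤ f3 T := ge_of_tendsto (((hcf3 T hT0).mono Ico_subset_Ici_self))
    (by filter_upwards [hmemF] with t ht; exact (hgood t ht.1 ht.2).2.2.1.le)
  have hf4T : 0 ≤ f4 T := ge_of_tendsto (((hcf4 T hT0).mono Ico_subset_Ici_self))
    (by filter_upwards [hmemF] with t ht; exact (hgood t ht.1 ht.2).2.2.2.le)
  obtain ⟨C, hC⟩ := hAB T
  have hC0 : 0 ≤ C := (abs_nonneg _).trans (hC 0 ⟨le_rfl, hT0⟩).1
  have hcosbc : 0 < Real.cos bc :=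
    Real.cos_pos_of_mem_Ioo ⟨by linarith [Real.pi_pos], hbc2⟩
  have hcosβ : ∀ t, 0 ≤ t → t < T → Real.cos bc ≤ Real.cos (β t) := by
    intro t h0 hltT
    obtain ⟨_, _, g3, g4⟩ := hgood t h0 hltT
    rw [hf3] at g3; rw [hf4] at g4
    have hle1 := hρβle t h0
    have hpos := hρβpos t
    have hbρ : bc * ρβ t ≤ bc := by
      calc bc * ρβ t ≤ bc * 1 := mul_le_mul_of_nonneg_left hle1 hbc.le
        _ = bc := mul_one bc
    have habs : |β t| ≤ bc := by
      rw [abs_le]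
      constructor <;> linarith
    calc Real.cos bc ≤ Real.cos |β t| :=
          Real.cos_le_cos_of_nonneg_of_le_pi (abs_nonneg _)
            (by linarith [Real.pi_pos]) habs
      _ = Real.cos (β t) := Real.cos_abs _
  have hξtend : Tendsto (fun t => (d t - ddes) / ρd t) (𝓝[Ico (0:ℝ) T] T)
      (𝓝 ((d T - ddes) / ρd T)) :=
    (htendd.sub_const ddes).div htendρd (hρdpos T).ne'
  by_cases hC2 : f2 T ≤ 0
  · -- upper distance boundary is reached : contradiction
    have hf2eq : f2 T = 0 := le_antisymm hC2 hf2T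
    have heT : d T - ddes = b * ρd T := by have h := hf2 T; rw [hf2eq] at h; linarith
    have hξb : (d T - ddes) / ρd T = b := by
      rw [heT, mul_div_assoc, div_self (hρdpos T).ne', mul_one]
    have hVtop : Tendsto V (𝓝[Ico (0:ℝ) T] T) atTop := by
      have h1 : Tendsto (fun t => (d t - ddes) / ρd t) (𝓝[Ico (0:ℝ) T] T) (𝓝 b) :=
        hξb ▸ hξtend
      have h2 : ∀ᶠ t in 𝓝[Ico (0:ℝ) T] T, (d t - ddes) / ρd t < b := by
        filter_upwards [hmemF] with t ht
        have g2 := (hgood t ht.1 ht.2).2.1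
        rw [hf2] at g2
        rw [div_lt_iff₀ (hρdpos t)]; linarith
      exact (Filter.Tendsto.const_mul_atTop hkd
        (eps_tendsto_atTop ha hb h1 h2)).congr' (by
          filter_upwards [hmemF] with t ht; exact (hV t ht.1).symm)
    have hVlarge : ∀ᶠ t in 𝓝[Ico (0:ℝ) T] T,
        (C + b * ld + 1) / Real.cos bc ≤ V t := hVtop.eventually_ge_atTop _
    refine no_exit_up (g := fun t => (d t - ddes) - b * ρd t)
      (G := fun t => (A t - V t * Real.cos (β t)) -
        b * (-(ld * (1 - ρdi / M) * Real.exp (-ld * t)))) hTpos ?_ ?_ ?_ ?_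
    · intro t ht
      exact ((hd' t ht.1).sub_const ddes).sub
        (((hρdD t).const_mul b).hasDerivWithinAt)
    · filter_upwards [hmemF, hVlarge] with t ht hVt
      have habsA := abs_le.1 (hC t ⟨ht.1, ht.2.le⟩).1
      have hρb := abs_le.1 (perfFn_deriv_bound hρdpos0 hρd' hld.le ht.1)
      have hcos := hcosβ t ht.1 ht.2
      have hKpos : (0:ℝ) < (C + b * ld + 1) / Real.cos bc := by positivity
      have hmul : (C + b * ld + 1) / Real.cos bc * Real.cos bc ≤
          V t * Real.cos (β t) :=
        mul_le_mul hVt hcos hcosbc.le (hKpos.le.trans hVt)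
      rw [div_mul_cancel₀ _ hcosbc.ne'] at hmul
      have h5 : b * (-ld) ≤ b * (-(ld * (1 - ρdi / M) * Real.exp (-ld * t))) :=
        mul_le_mul_of_nonneg_left hρb.1 hb.le
      have := habsA.2
      linarith
    · intro t h0 hltT
      beta_reduce
      have g2 := (hgood t h0 hltT).2.1
      rw [hf2] at g2; linarith
    · have h := hf2 T; rw [hf2eq] at h; beta_reduce; linarith
  by_cases hC1 : f1 T ≤ 0
  · -- lower distance boundary is reached : contradiction
    have hf1eq : f1 T = 0 := le_antisymm hC1 hf1T
    have heT : d T - ddes = -a * ρd T := by have h := hf1 T; rw [hf1eq] at h; linarith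
    have hξa : (d T - ddes) / ρd T = -a := by
      rw [heT, mul_div_assoc, div_self (hρdpos T).ne', mul_one]
    have hVbot : Tendsto V (𝓝[Ico (0:ℝ) T] T) atBot := by
      have h1 : Tendsto (fun t => (d t - ddes) / ρd t) (𝓝[Ico (0:ℝ) T] T) (𝓝 (-a)) :=
        hξa ▸ hξtend
      have h2 : ∀ᶠ t in 𝓝[Ico (0:ℝ) T] T, -a < (d t - ddes) / ρd t := by
        filter_upwards [hmemF] with t ht
        have g1 := (hgood t ht.1 ht.2).1
        rw [hf1] at g1
        rw [lt_div_iff₀ (hρdpos t)]; linarith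
      exact (Filter.Tendsto.const_mul_atBot hkd
        (eps_tendsto_atBot ha hb h1 h2)).congr' (by
          filter_upwards [hmemF] with t ht; exact (hV t ht.1).symm)
    have hVsmall : ∀ᶠ t in 𝓝[Ico (0:ℝ) T] T,
        V t ≤ -((C + a * ld + 1) / Real.cos bc) := hVbot.eventually_le_atBot _
    refine no_exit_down (g := fun t => (d t - ddes) + a * ρd t)
      (G := fun t => (A t - V t * Real.cos (β t)) +
        a * (-(ld * (1 - ρdi / M) * Real.exp (-ld * t)))) hTpos ?_ ?_ ?_ ?_
    · intro t ht
      exact ((hd' t ht.1).sub_const ddes).add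
        (((hρdD t).const_mul a).hasDerivWithinAt)
    · filter_upwards [hmemF, hVsmall] with t ht hVt
      have habsA := abs_le.1 (hC t ⟨ht.1, ht.2.le⟩).1
      have hρb := abs_le.1 (perfFn_deriv_bound hρdpos0 hρd' hld.le ht.1)
      have hcos := hcosβ t ht.1 ht.2
      have hKpos : (0:ℝ) < (C + a * ld + 1) / Real.cos bc := by positivity
      have hmul : (C + a * ld + 1) / Real.cos bc * Real.cos bc ≤
          (-V t) * Real.cos (β t) :=
        mul_le_mul (by linarith) hcos hcosbc.le (by linarith)
      rw [div_mul_cancel₀ _ hcosbc.ne', neg_mul] at hmul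
      have h5 : a * (-ld) ≤ a * (-(ld * (1 - ρdi / M) * Real.exp (-ld * t))) :=
        mul_le_mul_of_nonneg_left hρb.1 ha.le
      have := habsA.1
      linarith
    · intro t h0 hltT
      beta_reduce
      have g1 := (hgood t h0 hltT).1
      rw [hf1] at g1; linarith
    · have h := hf1 T; rw [hf1eq] at h; beta_reduce; linarith
  -- distance stays strictly inside at time T; hence a bearing boundary is hit
  push_neg at hC1 hC2
  have hζtend : Tendsto (fun t => β t / ρβ t) (𝓝[Ico (0:ℝ) T] T)
      (𝓝 (β T / ρβ T)) := htendβ.div htendρβ (hρβpos T).ne'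
  -- a uniform bound for V near T
  have hg1T := hf1 T; have hg2T := hf2 T
  have hξmem1 : -a < (d T - ddes) / ρd T := by
    rw [lt_div_iff₀ (hρdpos T)]; rw [hf1] at hC1; linarith
  have hξmem2 : (d T - ddes) / ρd T < b := by
    rw [div_lt_iff₀ (hρdpos T)]; rw [hf2] at hC2; linarith
  have hnumpos : 0 < 1 + ((d T - ddes) / ρd T) / a := by
    have h3 := (div_lt_div_iff_of_pos_right ha).2 hξmem1
    rw [neg_div, div_self ha.ne'] at h3
    linarith
  have hdenpos : 0 < 1 - ((d T - ddes) / ρd T) / b := by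
    have h3 : ((d T - ddes) / ρd T) / b < 1 := (div_lt_one hb).2 hξmem2
    linarith
  have hVT : Tendsto V (𝓝[Ico (0:ℝ) T] T)
      (𝓝 (kd * Real.log ((1 + ((d T - ddes) / ρd T) / a) /
        (1 - ((d T - ddes) / ρd T) / b)))) := by
    have hnumt : Tendsto (fun t => 1 + ((d t - ddes) / ρd t) / a)
        (𝓝[Ico (0:ℝ) T] T) (𝓝 (1 + ((d T - ddes) / ρd T) / a)) :=
      (hξtend.div_const a).const_add 1
    have hdent : Tendsto (fun t => 1 - ((d t - ddes) / ρd t) / b)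
        (𝓝[Ico (0:ℝ) T] T) (𝓝 (1 - ((d T - ddes) / ρd T) / b)) :=
      (hξtend.div_const b).const_sub 1
    have hqt := hnumt.div hdent hdenpos.ne'
    have hqpos : 0 < (1 + ((d T - ddes) / ρd T) / a) /
        (1 - ((d T - ddes) / ρd T) / b) := div_pos hnumpos hdenpos
    have hlogt := ((Real.continuousAt_log hqpos.ne').tendsto).comp hqt
    exact (hlogt.const_mul kd).congr' (by
      filter_upwards [hmemF] with t ht; rw [hV t ht.1]; rfl)
  set L : ℝ := kd * Real.log ((1 + ((d T - ddes) / ρd T) / a) /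
      (1 - ((d T - ddes) / ρd T) / b)) with hL_def
  have hVbb : ∀ᶠ t in 𝓝[Ico (0:ℝ) T] T, |V t| ≤ |L| + 1 := by
    have hball : ∀ᶠ t in 𝓝[Ico (0:ℝ) T] T, V t ∈ Metric.ball L 1 :=
      hVT (Metric.ball_mem_nhds L one_pos)
    filter_upwards [hball] with t ht
    rw [Metric.mem_ball, Real.dist_eq] at ht
    calc |V t| = |(V t - L) + L| := by ring_nf
      _ ≤ |V t - L| + |L| := abs_add_le _ _
      _ ≤ |L| + 1 := by linarith
  have hdTpos : 0 < d T := by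
    rw [hf1] at hC1
    have h6 : a * ρd T ≤ a * 1 := mul_le_mul_of_nonneg_left (hρdle T hT0) ha.le
    rw [mul_one] at h6
    linarith [ha_def, hdcol]
  have hdlow : ∀ᶠ t in 𝓝[Ico (0:ℝ) T] T, d T / 2 < d t :=
    htendd.eventually (eventually_gt_nhds (half_lt_self hdTpos))
  set K1 : ℝ := (C + (|L| + 1)) / (d T / 2) with hK1_def
  have hK1nn : 0 ≤ K1 := by positivity
  have hquot : ∀ᶠ t in 𝓝[Ico (0:ℝ) T] T,
      |(B t + V t * Real.sin (β t)) / d t| ≤ K1 := by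
    filter_upwards [hmemF, hVbb, hdlow] with t ht hVt hdt
    have hB := (hC t ⟨ht.1, ht.2.le⟩).2
    have hnum : |B t + V t * Real.sin (β t)| ≤ C + (|L| + 1) := by
      calc |B t + V t * Real.sin (β t)| ≤ |B t| + |V t * Real.sin (β t)| := abs_add_le _ _
        _ ≤ C + |V t| * 1 := by
            rw [abs_mul]
            exact add_le_add hB
              (mul_le_mul_of_nonneg_left (Real.abs_sin_le_one _) (abs_nonneg _))
        _ ≤ C + (|L| + 1) := by rw [mul_one]; linarith
    have hdtpos : 0 < d t := lt_trans (by linarith) hdt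
    rw [abs_div, abs_of_pos hdtpos]
    exact div_le_div₀ (by positivity) hnum (by linarith) hdt.le
  -- bearing boundary cases
  by_cases hC4 : f4 T ≤ 0
  · -- upper bearing boundary
    have hf4eq : f4 T = 0 := le_antisymm hC4 hf4T
    have hβT : β T = bc * ρβ T := by have h := hf4 T; rw [hf4eq] at h; linarith
    have hζb : β T / ρβ T = bc := by
      rw [hβT, mul_div_assoc, div_self (hρβpos T).ne', mul_one]
    have h1 : Tendsto (fun t => β t / ρβ t) (𝓝[Ico (0:ℝ) T] T) (𝓝 bc) :=
      hζb ▸ hζtend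
    have h2 : ∀ᶠ t in 𝓝[Ico (0:ℝ) T] T, β t / ρβ t < bc := by
      filter_upwards [hmemF] with t ht
      have g4 := (hgood t ht.1 ht.2).2.2.2
      rw [hf4] at g4
      rw [div_lt_iff₀ (hρβpos t)]; linarith
    have h2' : ∀ᶠ t in 𝓝[Ico (0:ℝ) T] T, -bc < β t / ρβ t := by
      filter_upwards [hmemF] with t ht
      have g3 := (hgood t ht.1 ht.2).2.2.1
      rw [hf3] at g3
      rw [lt_div_iff₀ (hρβpos t)]; linarith
    have heps : Tendsto (fun t => epsErr bc bc (β t / ρβ t))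
        (𝓝[Ico (0:ℝ) T] T) atTop := eps_tendsto_atTop hbc hbc h1 h2
    have hprod : Tendsto (fun t => (1 + (β t / ρβ t) / bc) * (1 - (β t / ρβ t) / bc))
        (𝓝[Ico (0:ℝ) T] T) (𝓝[>] 0) := by
      refine tendsto_nhdsWithin_iff.2 ⟨?_, ?_⟩
      · have := ((h1.div_const bc).const_add 1).mul ((h1.div_const bc).const_sub 1)
        have hz : (1 + bc / bc) * (1 - bc / bc) = 0 := by
          rw [div_self hbc.ne']; ring
        rwa [hz] at this
      · filter_upwards [h2, h2'] with t hlt hgt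
        have hn : 0 < 1 + (β t / ρβ t) / bc := by
          have h3 := (div_lt_div_iff_of_pos_right hbc).2 hgt
          rw [neg_div, div_self hbc.ne'] at h3; linarith
        have hd2 : 0 < 1 - (β t / ρβ t) / bc := by
          have h3 : (β t / ρβ t) / bc < 1 := (div_lt_one hbc).2 hlt
          linarith
        exact mul_pos hn hd2
    have hgain : Tendsto (fun t => gainFn bc bc (β t / ρβ t))
        (𝓝[Ico (0:ℝ) T] T) atTop := gain_tendsto_atTop hbc hbc hprod
    have hfrac : Tendsto (fun t => kβ / ρβ t) (𝓝[Ico (0:ℝ) T] T)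
        (𝓝 (kβ / ρβ T)) := tendsto_const_nhds.div htendρβ (hρβpos T).ne'
    have hfracpos : 0 < kβ / ρβ T := div_pos hkβ (hρβpos T)
    have hWtop : Tendsto W (𝓝[Ico (0:ℝ) T] T) atTop := by
      have := (Filter.Tendsto.pos_mul_atTop hfracpos hfrac hgain).atTop_mul_atTop₀ heps
      exact this.congr' (by filter_upwards [hmemF] with t ht; exact (hW t ht.1).symm)
    have hWlarge : ∀ᶠ t in 𝓝[Ico (0:ℝ) T] T, K1 + bc * lβ + 1 ≤ W t :=
      hWtop.eventually_ge_atTop _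
    refine no_exit_up (g := fun t => β t - bc * ρβ t)
      (G := fun t => ((B t + V t * Real.sin (β t)) / d t - W t) -
        bc * (-(lβ * (1 - ρbi / bc) * Real.exp (-lβ * t)))) hTpos ?_ ?_ ?_ ?_
    · intro t ht
      exact (hβ' t ht.1).sub
        (((hρβD t).const_mul bc).hasDerivWithinAt)
    · filter_upwards [hquot, hWlarge, hmemF] with t hq hWt ht
      have hρb := abs_le.1 (perfFn_deriv_bound hρβ0 hρβ' hlβ.le ht.1)
      have h5 : bc * (-lβ) ≤ bc * (-(lβ * (1 - ρbi / bc) * Real.exp (-lβ * t))) :=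
        mul_le_mul_of_nonneg_left hρb.1 hbc.le
      have habsq := abs_le.1 hq
      have := habsq.2
      linarith
    · intro t h0 hltT
      beta_reduce
      have g4 := (hgood t h0 hltT).2.2.2
      rw [hf4] at g4; linarith
    · have h := hf4 T; rw [hf4eq] at h; beta_reduce; linarith
  · -- lower bearing boundary
    have hf3le : f3 T ≤ 0 := by
      rcases hTS.2 with h | h | h | h
      · exact absurd h (not_le.2 hC1)
      · exact absurd h (not_le.2 hC2)
      · exact h
      · exact absurd h hC4
    have hf3eq : f3 T = 0 := le_antisymm hf3le hf3T
    have hβT : β T = -bc * ρβ T := by have h := hf3 T; rw [hf3eq] at h; linarith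
    have hζb : β T / ρβ T = -bc := by
      rw [hβT, mul_div_assoc, div_self (hρβpos T).ne', mul_one]
    have h1 : Tendsto (fun t => β t / ρβ t) (𝓝[Ico (0:ℝ) T] T) (𝓝 (-bc)) :=
      hζb ▸ hζtend
    have h2 : ∀ᶠ t in 𝓝[Ico (0:ℝ) T] T, β t / ρβ t < bc := by
      filter_upwards [hmemF] with t ht
      have g4 := (hgood t ht.1 ht.2).2.2.2
      rw [hf4] at g4
      rw [div_lt_iff₀ (hρβpos t)]; linarith
    have h2' : ∀ᶠ t in 𝓝[Ico (0:ℝ) T] T, -bc < β t / ρβ t := by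
      filter_upwards [hmemF] with t ht
      have g3 := (hgood t ht.1 ht.2).2.2.1
      rw [hf3] at g3
      rw [lt_div_iff₀ (hρβpos t)]; linarith
    have heps : Tendsto (fun t => epsErr bc bc (β t / ρβ t))
        (𝓝[Ico (0:ℝ) T] T) atBot := eps_tendsto_atBot hbc hbc h1 h2'
    have hprod : Tendsto (fun t => (1 + (β t / ρβ t) / bc) * (1 - (β t / ρβ t) / bc))
        (𝓝[Ico (0:ℝ) T] T) (𝓝[>] 0) := by
      refine tendsto_nhdsWithin_iff.2 ⟨?_, ?_⟩
      · have := ((h1.div_const bc).const_add 1).mul ((h1.div_const bc).const_sub 1)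
        have hz : (1 + -bc / bc) * (1 - -bc / bc) = 0 := by
          rw [neg_div, div_self hbc.ne']; ring
        rwa [hz] at this
      · filter_upwards [h2, h2'] with t hlt hgt
        have hn : 0 < 1 + (β t / ρβ t) / bc := by
          have h3 := (div_lt_div_iff_of_pos_right hbc).2 hgt
          rw [neg_div, div_self hbc.ne'] at h3; linarith
        have hd2 : 0 < 1 - (β t / ρβ t) / bc := by
          have h3 : (β t / ρβ t) / bc < 1 := (div_lt_one hbc).2 hlt
          linarith
        exact mul_pos hn hd2
    have hgain : Tendsto (fun t => gainFn bc bc (β t / ρβ t))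
        (𝓝[Ico (0:ℝ) T] T) atTop := gain_tendsto_atTop hbc hbc hprod
    have hfrac : Tendsto (fun t => kβ / ρβ t) (𝓝[Ico (0:ℝ) T] T)
        (𝓝 (kβ / ρβ T)) := tendsto_const_nhds.div htendρβ (hρβpos T).ne'
    have hfracpos : 0 < kβ / ρβ T := div_pos hkβ (hρβpos T)
    have hWbot : Tendsto W (𝓝[Ico (0:ℝ) T] T) atBot := by
      have := (Filter.Tendsto.pos_mul_atTop hfracpos hfrac hgain).atTop_mul_atBot₀ heps
      exact this.congr' (by filter_upwards [hmemF] with t ht; exact (hW t ht.1).symm)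
    have hWsmall : ∀ᶠ t in 𝓝[Ico (0:ℝ) T] T, W t ≤ -(K1 + bc * lβ + 1) :=
      hWbot.eventually_le_atBot _
    refine no_exit_down (g := fun t => β t + bc * ρβ t)
      (G := fun t => ((B t + V t * Real.sin (β t)) / d t - W t) +
        bc * (-(lβ * (1 - ρbi / bc) * Real.exp (-lβ * t)))) hTpos ?_ ?_ ?_ ?_
    · intro t ht
      exact (hβ' t ht.1).add
        (((hρβD t).const_mul bc).hasDerivWithinAt)
    · filter_upwards [hquot, hWsmall, hmemF] with t hq hWt ht
      have hρb := abs_le.1 (perfFn_deriv_bound hρβ0 hρβ' hlβ.le ht.1)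
      have h5 : bc * (-lβ) ≤ bc * (-(lβ * (1 - ρbi / bc) * Real.exp (-lβ * t))) :=
        mul_le_mul_of_nonneg_left hρb.1 hbc.le
      have habsq := abs_le.1 hq
      have := habsq.1
      linarith
    · intro t h0 hltT
      beta_reduce
      have g3 := (hgood t h0 hltT).2.2.1
      rw [hf3] at g3; linarith
    · have h := hf3 T; rw [hf3eq] at h; beta_reduce; linarith

end PlatoonHelpers

set_option maxHeartbeats 2000000 in
/-- main platoon theorem. Under the decentralized
prescribed-performance control laws, the distance and bearing errors of each
vehicle evolve strictly inside the prescribed performance envelopes for all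
t ≥ 0; in particular the collision and connectivity constraints are never
violated. -/
theorem platoon_prescribed_performance
    (N : ℕ) (hN : 1 ≤ N)
    (d_col d_con β_con ρd_inf ρβ_inf l_d l_β : ℝ)
    (d_des k_d k_β : ℕ → ℝ)
    (hd_col : 0 < d_col)
    (hd_des : ∀ i, 1 ≤ i → i ≤ N → d_col < d_des i ∧ d_des i < d_con)
    (hβ_con : 0 < β_con) (hβ_con' : β_con < Real.pi / 2)
    (hl_d : 0 < l_d) (hl_β : 0 < l_β)
    (hρd : 0 < ρd_inf)
    (hρd' : ∀ i, 1 ≤ i → i ≤ N → ρd_inf < max (d_des i - d_col) (d_con - d_des i))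
    (hρβ : 0 < ρβ_inf) (hρβ' : ρβ_inf < β_con)
    (hk_d : ∀ i, 1 ≤ i → i ≤ N → 0 < k_d i)
    (hk_β : ∀ i, 1 ≤ i → i ≤ N → 0 < k_β i)
    (x y φ v ω : ℕ → ℝ → ℝ)
    (hx : ∀ i, i ≤ N → ∀ t : ℝ, 0 ≤ t →
      HasDerivWithinAt (x i) (v i t * Real.cos (φ i t)) (Set.Ici (0 : ℝ)) t)
    (hy : ∀ i, i ≤ N → ∀ t : ℝ, 0 ≤ t →
      HasDerivWithinAt (y i) (v i t * Real.sin (φ i t)) (Set.Ici (0 : ℝ)) t)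
    (hφ : ∀ i, i ≤ N → ∀ t : ℝ, 0 ≤ t →
      HasDerivWithinAt (φ i) (ω i t) (Set.Ici (0 : ℝ)) t)
    (hlead : ∃ C : ℝ, ∀ t : ℝ, 0 ≤ t → |v 0 t| ≤ C ∧ |ω 0 t| ≤ C)
    (d β : ℕ → ℝ → ℝ)
    (hdiff : ∀ i, 1 ≤ i → i ≤ N → ∀ t : ℝ, 0 ≤ t →
      DifferentiableWithinAt ℝ (d i) (Set.Ici (0 : ℝ)) t ∧
      DifferentiableWithinAt ℝ (β i) (Set.Ici (0 : ℝ)) t)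
    (hdpos : ∀ i, 1 ≤ i → i ≤ N → ∀ t : ℝ, 0 ≤ t → 0 < d i t)
    (hgx : ∀ i, 1 ≤ i → i ≤ N → ∀ t : ℝ, 0 ≤ t →
      x (i - 1) t - x i t = d i t * Real.cos (φ i t + β i t))
    (hgy : ∀ i, 1 ≤ i → i ≤ N → ∀ t : ℝ, 0 ≤ t →
      y (i - 1) t - y i t = d i t * Real.sin (φ i t + β i t))
    (hv : ∀ i, 1 ≤ i → i ≤ N → ∀ t : ℝ, 0 ≤ t →
      v i t = k_d i * epsErr (d_des i - d_col) (d_con - d_des i)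
        ((d i t - d_des i) /
          perfFn l_d ρd_inf (max (d_des i - d_col) (d_con - d_des i)) t))
    (hω : ∀ i, 1 ≤ i → i ≤ N → ∀ t : ℝ, 0 ≤ t →
      ω i t = (k_β i / perfFn l_β ρβ_inf β_con t) *
        gainFn β_con β_con (β i t / perfFn l_β ρβ_inf β_con t) *
        epsErr β_con β_con (β i t / perfFn l_β ρβ_inf β_con t))
    (hinit : ∀ i, 1 ≤ i → i ≤ N →
      (d_col < d i 0 ∧ d i 0 < d_con) ∧ |β i 0| < β_con)
    :
    ∀ i, 1 ≤ i → i ≤ N → ∀ t : ℝ, 0 ≤ t →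
      (-(d_des i - d_col) *
          perfFn l_d ρd_inf (max (d_des i - d_col) (d_con - d_des i)) t <
            d i t - d_des i ∧
        d i t - d_des i <
          (d_con - d_des i) *
            perfFn l_d ρd_inf (max (d_des i - d_col) (d_con - d_des i)) t) ∧
      (-β_con * perfFn l_β ρβ_inf β_con t < β i t ∧
        β i t < β_con * perfFn l_β ρβ_inf β_con t) ∧
      (d_col < d i t ∧ d i t < d_con ∧ |β i t| < β_con) := by
  have bound0 : ∀ T : ℝ, ∃ C : ℝ, ∀ t ∈ Set.Icc (0:ℝ) T, |v 0 t| ≤ C := by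
    obtain ⟨C, hC⟩ := hlead
    exact fun T => ⟨C, fun t ht => (hC t ht.1).1⟩
  have main : ∀ i, 1 ≤ i → i ≤ N →
      (∀ T : ℝ, ∃ C : ℝ, ∀ t ∈ Set.Icc (0:ℝ) T, |v (i-1) t| ≤ C) →
      ∀ t : ℝ, 0 ≤ t →
        (-(d_des i - d_col) *
            perfFn l_d ρd_inf (max (d_des i - d_col) (d_con - d_des i)) t <
              d i t - d_des i ∧
          d i t - d_des i <
            (d_con - d_des i) *
              perfFn l_d ρd_inf (max (d_des i - d_col) (d_con - d_des i)) t) ∧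
        (-β_con * perfFn l_β ρβ_inf β_con t < β i t ∧
          β i t < β_con * perfFn l_β ρβ_inf β_con t) := by
    intro i hi1 hiN hprev
    have hiN' : i - 1 ≤ N := by omega
    have hdyn : ∀ t : ℝ, 0 ≤ t →
        HasDerivWithinAt (d i)
          (v (i-1) t * Real.cos (φ (i-1) t - (φ i t + β i t))
            - v i t * Real.cos (β i t)) (Set.Ici 0) t ∧
        HasDerivWithinAt (β i)
          ((v (i-1) t * Real.sin (φ (i-1) t - (φ i t + β i t))
            + v i t * Real.sin (β i t)) / d i t - ω i t) (Set.Ici 0) t := by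
      intro t ht
      obtain ⟨hdd, hbb⟩ := hdiff i hi1 hiN t ht
      have hdD : HasDerivWithinAt (d i) (derivWithin (d i) (Set.Ici 0) t)
          (Set.Ici 0) t := hdd.hasDerivWithinAt
      have hbB : HasDerivWithinAt (β i) (derivWithin (β i) (Set.Ici 0) t)
          (Set.Ici 0) t := hbb.hasDerivWithinAt
      set D := derivWithin (d i) (Set.Ici 0) t
      set Bd := derivWithin (β i) (Set.Ici 0) t
      have hθ : HasDerivWithinAt (fun s => φ i s + β i s) (ω i t + Bd)
          (Set.Ici 0) t := (hφ i hiN t ht).add hbB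
      have hprodx : HasDerivWithinAt (fun s => d i s * Real.cos (φ i s + β i s))
          (D * Real.cos (φ i t + β i t) +
            d i t * (-Real.sin (φ i t + β i t) * (ω i t + Bd))) (Set.Ici 0) t :=
        hdD.mul hθ.cos
      have hprody : HasDerivWithinAt (fun s => d i s * Real.sin (φ i s + β i s))
          (D * Real.sin (φ i t + β i t) +
            d i t * (Real.cos (φ i t + β i t) * (ω i t + Bd))) (Set.Ici 0) t :=
        hdD.mul hθ.sin
      have hlx : HasDerivWithinAt (fun s => x (i-1) s - x i s)
          (v (i-1) t * Real.cos (φ (i-1) t) - v i t * Real.cos (φ i t))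
          (Set.Ici 0) t := (hx (i-1) hiN' t ht).sub (hx i hiN t ht)
      have hly : HasDerivWithinAt (fun s => y (i-1) s - y i s)
          (v (i-1) t * Real.sin (φ (i-1) t) - v i t * Real.sin (φ i t))
          (Set.Ici 0) t := (hy (i-1) hiN' t ht).sub (hy i hiN t ht)
      have hrx : HasDerivWithinAt (fun s => x (i-1) s - x i s)
          (D * Real.cos (φ i t + β i t) +
            d i t * (-Real.sin (φ i t + β i t) * (ω i t + Bd))) (Set.Ici 0) t :=
        hprodx.congr (fun s hs => hgx i hi1 hiN s hs) (hgx i hi1 hiN t ht)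
      have hry : HasDerivWithinAt (fun s => y (i-1) s - y i s)
          (D * Real.sin (φ i t + β i t) +
            d i t * (Real.cos (φ i t + β i t) * (ω i t + Bd))) (Set.Ici 0) t :=
        hprody.congr (fun s hs => hgy i hi1 hiN s hs) (hgy i hi1 hiN t ht)
      have hux := (uniqueDiffOn_Ici (0:ℝ) t ht).eq_deriv _ hlx hrx
      have huy := (uniqueDiffOn_Ici (0:ℝ) t ht).eq_deriv _ hly hry
      have hpy : Real.sin (φ i t + β i t) ^ 2 + Real.cos (φ i t + β i t) ^ 2 = 1 :=
        Real.sin_sq_add_cos_sq _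
      have hcosb : Real.cos (β i t) = Real.cos (φ i t + β i t) * Real.cos (φ i t)
          + Real.sin (φ i t + β i t) * Real.sin (φ i t) := by
        have h0 : (φ i t + β i t) - φ i t = β i t := by ring
        have := Real.cos_sub (φ i t + β i t) (φ i t)
        rw [h0] at this
        exact this
      have hsinb : Real.sin (β i t) = Real.sin (φ i t + β i t) * Real.cos (φ i t)
          - Real.cos (φ i t + β i t) * Real.sin (φ i t) := by
        have h0 : (φ i t + β i t) - φ i t = β i t := by ring
        have := Real.sin_sub (φ i t + β i t) (φ i t)
        rw [h0] at this
        exact this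
      constructor
      · have hDval : D = v (i-1) t * Real.cos (φ (i-1) t - (φ i t + β i t))
            - v i t * Real.cos (β i t) := by
          rw [Real.cos_sub, hcosb]
          linear_combination (-(Real.cos (φ i t + β i t))) * hux
            - Real.sin (φ i t + β i t) * huy - D * hpy
        exact hDval ▸ hdD
      · have hdne := (hdpos i hi1 hiN t ht).ne'
        have hprodeq : d i t * (ω i t + Bd) =
            v (i-1) t * Real.sin (φ (i-1) t - (φ i t + β i t))
              + v i t * Real.sin (β i t) := by
          rw [Real.sin_sub, hsinb]
          linear_combination Real.sin (φ i t + β i t) * hux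
            - Real.cos (φ i t + β i t) * huy
            - (d i t * (ω i t + Bd)) * hpy
        have hBdval : Bd = (v (i-1) t * Real.sin (φ (i-1) t - (φ i t + β i t))
            + v i t * Real.sin (β i t)) / d i t - ω i t := by
          rw [eq_sub_iff_add_eq, eq_div_iff hdne]
          linear_combination hprodeq
        exact hBdval ▸ hbB
    refine barrier d_col d_con (d_des i) β_con ρd_inf ρβ_inf l_d l_β (k_d i) (k_β i)
      hd_col (hd_des i hi1 hiN).1 (hd_des i hi1 hiN).2 hβ_con hβ_con' hl_d hl_β
      hρd (hρd' i hi1 hiN) hρβ hρβ' (hk_d i hi1 hiN) (hk_β i hi1 hiN)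
      (d i) (β i)
      (fun s => v (i-1) s * Real.cos (φ (i-1) s - (φ i s + β i s)))
      (fun s => v (i-1) s * Real.sin (φ (i-1) s - (φ i s + β i s)))
      (v i) (ω i) ?_ (fun t ht => hv i hi1 hiN t ht) (fun t ht => hω i hi1 hiN t ht)
      (fun t ht => (hdyn t ht).1) (fun t ht => (hdyn t ht).2)
      (hinit i hi1 hiN).1.1 (hinit i hi1 hiN).1.2 (hinit i hi1 hiN).2
    intro T
    obtain ⟨C, hC⟩ := hprev T
    refine ⟨C, fun t ht => ⟨?_, ?_⟩⟩
    · calc |v (i-1) t * Real.cos (φ (i-1) t - (φ i t + β i t))|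
          = |v (i-1) t| * |Real.cos (φ (i-1) t - (φ i t + β i t))| := abs_mul _ _
        _ ≤ |v (i-1) t| * 1 :=
            mul_le_mul_of_nonneg_left (Real.abs_cos_le_one _) (abs_nonneg _)
        _ = |v (i-1) t| := mul_one _
        _ ≤ C := hC t ht
    · calc |v (i-1) t * Real.sin (φ (i-1) t - (φ i t + β i t))|
          = |v (i-1) t| * |Real.sin (φ (i-1) t - (φ i t + β i t))| := abs_mul _ _
        _ ≤ |v (i-1) t| * 1 :=
            mul_le_mul_of_nonneg_left (Real.abs_sin_le_one _) (abs_nonneg _)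
        _ = |v (i-1) t| := mul_one _
        _ ≤ C := hC t ht
  have step : ∀ i, 1 ≤ i → i ≤ N →
      (∀ t : ℝ, 0 ≤ t →
        (-(d_des i - d_col) *
            perfFn l_d ρd_inf (max (d_des i - d_col) (d_con - d_des i)) t <
              d i t - d_des i ∧
          d i t - d_des i <
            (d_con - d_des i) *
              perfFn l_d ρd_inf (max (d_des i - d_col) (d_con - d_des i)) t) ∧
        (-β_con * perfFn l_β ρβ_inf β_con t < β i t ∧
          β i t < β_con * perfFn l_β ρβ_inf β_con t)) →
      ∀ T : ℝ, ∃ C : ℝ, ∀ t ∈ Set.Icc (0:ℝ) T, |v i t| ≤ C := by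
    intro i hi1 hiN henv T
    have ha : 0 < d_des i - d_col := by linarith [(hd_des i hi1 hiN).1]
    have hb : 0 < d_con - d_des i := by linarith [(hd_des i hi1 hiN).2]
    have hρpos : ∀ t, 0 < perfFn l_d ρd_inf
        (max (d_des i - d_col) (d_con - d_des i)) t :=
      perfFn_pos hρd (hρd' i hi1 hiN)
    have hcd : ContinuousOn (d i) (Set.Icc 0 T) := fun t ht =>
      ((hdiff i hi1 hiN t ht.1).1.continuousWithinAt).mono (fun s hs => hs.1)
    have hcρ : Continuous (perfFn l_d ρd_inf
        (max (d_des i - d_col) (d_con - d_des i))) := perfFn_continuous _ _ _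
    have hξ : ContinuousOn (fun t => (d i t - d_des i) /
        perfFn l_d ρd_inf (max (d_des i - d_col) (d_con - d_des i)) t)
        (Set.Icc 0 T) :=
      (hcd.sub continuousOn_const).div hcρ.continuousOn (fun t _ => (hρpos t).ne')
    have hbound : ∀ t ∈ Set.Icc (0:ℝ) T,
        0 < 1 + ((d i t - d_des i) /
          perfFn l_d ρd_inf (max (d_des i - d_col) (d_con - d_des i)) t) /
            (d_des i - d_col) ∧
        0 < 1 - ((d i t - d_des i) /
          perfFn l_d ρd_inf (max (d_des i - d_col) (d_con - d_des i)) t) /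
            (d_con - d_des i) := by
      intro t ht
      obtain ⟨⟨e1, e2⟩, _⟩ := henv t ht.1
      have hp := hρpos t
      constructor
      · have hgt : -(d_des i - d_col) < (d i t - d_des i) /
            perfFn l_d ρd_inf (max (d_des i - d_col) (d_con - d_des i)) t := by
          rw [lt_div_iff₀ hp]; linarith
        have h3 := (div_lt_div_iff_of_pos_right ha).2 hgt
        rw [neg_div, div_self ha.ne'] at h3
        linarith
      · have hlt : (d i t - d_des i) /
            perfFn l_d ρd_inf (max (d_des i - d_col) (d_con - d_des i)) t <
              d_con - d_des i := by
          rw [div_lt_iff₀ hp]; linarith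
        have h3 := (div_lt_one hb).2 hlt
        linarith
    have hfrac : ContinuousOn (fun t =>
        (1 + ((d i t - d_des i) /
          perfFn l_d ρd_inf (max (d_des i - d_col) (d_con - d_des i)) t) /
            (d_des i - d_col)) /
        (1 - ((d i t - d_des i) /
          perfFn l_d ρd_inf (max (d_des i - d_col) (d_con - d_des i)) t) /
            (d_con - d_des i))) (Set.Icc 0 T) :=
      (continuousOn_const.add (hξ.div_const _)).div
        (continuousOn_const.sub (hξ.div_const _))
        (fun t ht => (hbound t ht).2.ne')
    have hlogc : ContinuousOn (fun t => Real.log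
        ((1 + ((d i t - d_des i) /
          perfFn l_d ρd_inf (max (d_des i - d_col) (d_con - d_des i)) t) /
            (d_des i - d_col)) /
        (1 - ((d i t - d_des i) /
          perfFn l_d ρd_inf (max (d_des i - d_col) (d_con - d_des i)) t) /
            (d_con - d_des i)))) (Set.Icc 0 T) :=
      hfrac.log (fun t ht =>
        (div_pos (hbound t ht).1 (hbound t ht).2).ne')
    have hvc : ContinuousOn (v i) (Set.Icc 0 T) := by
      refine (ContinuousOn.mul (continuousOn_const (c := k_d i)) hlogc).congr ?_
      intro t ht
      rw [hv i hi1 hiN t ht.1]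
      rfl
    obtain ⟨C, hC⟩ := isCompact_Icc.exists_bound_of_continuousOn hvc
    exact ⟨C, fun t ht => by simpa [Real.norm_eq_abs] using hC t ht⟩
  have hrec : ∀ i : ℕ,
      (i ≤ N → ∀ T : ℝ, ∃ C : ℝ, ∀ t ∈ Set.Icc (0:ℝ) T, |v i t| ≤ C) ∧
      (1 ≤ i → i ≤ N → ∀ t : ℝ, 0 ≤ t →
        (-(d_des i - d_col) *
            perfFn l_d ρd_inf (max (d_des i - d_col) (d_con - d_des i)) t <
              d i t - d_des i ∧
          d i t - d_des i <
            (d_con - d_des i) *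
              perfFn l_d ρd_inf (max (d_des i - d_col) (d_con - d_des i)) t) ∧
        (-β_con * perfFn l_β ρβ_inf β_con t < β i t ∧
          β i t < β_con * perfFn l_β ρβ_inf β_con t)) := by
    intro i
    induction i with
    | zero => exact ⟨fun _ => bound0, fun h => absurd h (by norm_num)⟩
    | succ n ih =>
      have henv : 1 ≤ n + 1 → n + 1 ≤ N → ∀ t : ℝ, 0 ≤ t → _ := fun h1 hN' =>
        main (n+1) h1 hN' (by simpa using ih.1 (by omega))
      exact ⟨fun hN' => step (n+1) (by omega) hN' (henv (by omega) hN'), henv⟩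
  intro i hi1 hiN t ht
  obtain ⟨⟨e1, e2⟩, e3, e4⟩ := (hrec i).2 hi1 hiN t ht
  have ha : 0 < d_des i - d_col := by linarith [(hd_des i hi1 hiN).1]
  have hb : 0 < d_con - d_des i := by linarith [(hd_des i hi1 hiN).2]
  have hρdle : perfFn l_d ρd_inf (max (d_des i - d_col) (d_con - d_des i)) t ≤ 1 :=
    perfFn_le_one hρd (hρd' i hi1 hiN) hl_d.le ht
  have hρβle : perfFn l_β ρβ_inf β_con t ≤ 1 :=
    perfFn_le_one hρβ hρβ' hl_β.le ht
  have h6 : (d_des i - d_col) *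
      perfFn l_d ρd_inf (max (d_des i - d_col) (d_con - d_des i)) t ≤
        (d_des i - d_col) * 1 := mul_le_mul_of_nonneg_left hρdle ha.le
  have h7 : (d_con - d_des i) *
      perfFn l_d ρd_inf (max (d_des i - d_col) (d_con - d_des i)) t ≤
        (d_con - d_des i) * 1 := mul_le_mul_of_nonneg_left hρdle hb.le
  have h8 : β_con * perfFn l_β ρβ_inf β_con t ≤ β_con * 1 :=
    mul_le_mul_of_nonneg_left hρβle hβ_con.le
  refine ⟨⟨e1, e2⟩, ⟨e3, e4⟩, by linarith, by linarith,
    abs_lt.2 ⟨by linarith, by linarith⟩⟩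
end
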